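/- arXiv:1705.02548 — 5 statements merged into one kernel-verified Lean document; each statement's English description precedes it below -/
import Mathlib

section
/- Let φ be a nonnegative locally integrable function on (0,∞) and suppose H_φ is bounded on L¹(ℝ), i.e., there exists C ≥ 0 with ‖H_φ f‖_{L¹} ≤ C ‖f‖_{L¹} for all f ∈ L¹(ℝ). Then ∫₀^∞ φ(t) dt ≤ C. In particular ∫₀^∞ φ(t) dt < ∞. -/
open MeasureTheory Set
open scoped ENNReal NNReal

/-- If φ ≥ 0 is locally integrable on (0,∞) and H_φ is bounded on L¹(ℝ) with
‖H_φ f‖₁ ≤ C ‖f‖₁ for all f ∈ L¹, then ∫₀^∞ φ(t) dt ≤ C; in particular the integral is finite. -/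
theorem hausdorff_L1_necessary (φ : ℝ → ℝ) (hφ : ∀ t ∈ Ioi (0:ℝ), 0 ≤ φ t)
    (hloc : LocallyIntegrableOn φ (Ioi 0)) (C : ℝ) (hC : 0 ≤ C)
    (hbd : ∀ f : ℝ → ℂ, Integrable f →
      eLpNorm (fun x : ℝ => ∫ t in Ioi (0:ℝ), f (x / t) * ((φ t / t : ℝ) : ℂ)) 1 volume ≤
        ENNReal.ofReal C * eLpNorm f 1 volume) :
    (∫⁻ t in Ioi (0:ℝ), ENNReal.ofReal (φ t)) ≤ ENNReal.ofReal C ∧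
      (∫⁻ t in Ioi (0:ℝ), ENNReal.ofReal (φ t)) < ⊤ := by
  classical
  -- test function: indicator of [1/2, 1]
  set f : ℝ → ℂ := (Icc (1/2 : ℝ) 1).indicator (fun _ => 1) with hfdef
  have hfint : Integrable f := by
    refine IntegrableOn.integrable_indicator ?_ measurableSet_Icc
    exact integrableOn_const (by simp [Real.volume_Icc])
  have hfnorm : eLpNorm f 1 volume = ENNReal.ofReal (1/2) := by
    rw [eLpNorm_one_eq_lintegral_enorm]
    simp only [enorm_eq_nnnorm]
    have : ∀ x : ℝ, (‖f x‖₊ : ℝ≥0∞) = (Icc (1/2 : ℝ) 1).indicator (fun _ => (1:ℝ≥0∞)) x := by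
      intro x
      simp only [hfdef, Set.indicator_apply]
      split <;> simp
    simp_rw [this]
    rw [lintegral_indicator measurableSet_Icc _]
    simp [Real.volume_Icc]
    norm_num
    rw [one_div, ENNReal.ofReal_inv_of_pos two_pos]; simp
  -- measurable version of φ
  have hsm : AEStronglyMeasurable φ (volume.restrict (Ioi 0)) := hloc.aestronglyMeasurable
  set ψ : ℝ → ℝ := hsm.mk φ with hψdef
  have hψm : StronglyMeasurable ψ := hsm.stronglyMeasurable_mk
  have hψe : φ =ᵐ[volume.restrict (Ioi 0)] ψ := hsm.ae_eq_mk
  -- the transformed function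
  set g : ℝ → ℂ := fun x : ℝ => ∫ t in Ioi (0:ℝ), f (x / t) * ((φ t / t : ℝ) : ℂ) with hgdef
  -- Step B: for x > 0
  have hB : ∀ x : ℝ, 0 < x →
      (‖g x‖₊ : ℝ≥0∞) = ∫⁻ t in Ioi (0:ℝ),
        (Icc x (2*x)).indicator (fun t => ENNReal.ofReal (φ t / t)) t := by
    intro x hx
    have hIcc : Icc x (2*x) ⊆ Ioi (0:ℝ) := fun t ht => lt_of_lt_of_le hx ht.1
    have hInt : IntegrableOn (fun t => φ t / t) (Icc x (2*x)) volume := by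
      have h1 : IntegrableOn φ (Icc x (2*x)) volume :=
        hloc.integrableOn_compact_subset hIcc isCompact_Icc
      have h2 : ContinuousOn (fun t : ℝ => t⁻¹) (Icc x (2*x)) :=
        ContinuousOn.inv₀ continuousOn_id (fun t ht => ne_of_gt (hIcc ht))
      simp only [div_eq_inv_mul]
      exact IntegrableOn.continuousOn_mul h2 h1 isCompact_Icc
    have hptw : ∀ t ∈ Ioi (0:ℝ), f (x / t) * ((φ t / t : ℝ) : ℂ)
        = (Icc x (2*x)).indicator (fun t => ((φ t / t : ℝ) : ℂ)) t := by
      intro t ht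
      have ht' : (0:ℝ) < t := ht
      have hmem : x / t ∈ Icc (1/2 : ℝ) 1 ↔ t ∈ Icc x (2*x) := by
        rw [mem_Icc, mem_Icc, le_div_iff₀ ht', div_le_one ht']
        constructor <;> rintro ⟨h1, h2⟩ <;> constructor <;> linarith
      simp only [hfdef, Set.indicator_apply]
      rw [if_congr hmem rfl rfl]
      split <;> simp
    have hgx : g x = ((∫ t in Icc x (2*x), φ t / t : ℝ) : ℂ) := by
      show (∫ t in Ioi (0:ℝ), f (x / t) * ((φ t / t : ℝ) : ℂ)) = _
      rw [setIntegral_congr_fun measurableSet_Ioi hptw,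
        setIntegral_indicator measurableSet_Icc,
        inter_eq_self_of_subset_right hIcc]
      exact integral_ofReal
    have hnn : 0 ≤ ∫ t in Icc x (2*x), φ t / t :=
      setIntegral_nonneg measurableSet_Icc
        (fun t ht => div_nonneg (hφ t (hIcc ht)) (le_of_lt (hIcc ht)))
    rw [hgx]
    have : (‖((∫ t in Icc x (2*x), φ t / t : ℝ) : ℂ)‖₊ : ℝ≥0∞)
        = ENNReal.ofReal (∫ t in Icc x (2*x), φ t / t) := by
      rw [← Real.enorm_eq_ofReal hnn]
      simp
      rfl
    rw [this, ofReal_integral_eq_lintegral_ofReal hInt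
      ((ae_restrict_iff' measurableSet_Icc).2 (ae_of_all _
        (fun t ht => div_nonneg (hφ t (hIcc ht)) (le_of_lt (hIcc ht)))))]
    rw [lintegral_indicator measurableSet_Icc _, Measure.restrict_restrict measurableSet_Icc,
      inter_eq_self_of_subset_left hIcc]
  -- Step A: for x ≤ 0, g x = 0
  have hA : ∀ x : ℝ, x ≤ 0 → g x = 0 := by
    intro x hx
    rw [hgdef]
    rw [show (0:ℂ) = ∫ t in Ioi (0:ℝ), (0:ℂ) by simp]
    refine setIntegral_congr_fun measurableSet_Ioi (fun t ht => ?_)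
    have ht' : (0:ℝ) < t := ht
    have : x / t ∉ Icc (1/2 : ℝ) 1 := by
      intro h
      have := h.1
      have : (0:ℝ) < x / t := by linarith
      have := div_nonpos_of_nonpos_of_nonneg hx (le_of_lt ht')
      linarith
    have hf0 : f (x / t) = 0 := Set.indicator_of_notMem this _
    rw [hf0, zero_mul]
  -- compute eLpNorm g
  have hgnorm : eLpNorm g 1 volume
      = ∫⁻ x in Ioi (0:ℝ), ∫⁻ t in Ioi (0:ℝ),
          (Icc x (2*x)).indicator (fun t => ENNReal.ofReal (φ t / t)) t := by
    rw [eLpNorm_one_eq_lintegral_enorm]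
    simp only [enorm_eq_nnnorm]
    have : ∀ x : ℝ, (‖g x‖₊ : ℝ≥0∞) = (Ioi (0:ℝ)).indicator
        (fun x => ∫⁻ t in Ioi (0:ℝ),
          (Icc x (2*x)).indicator (fun t => ENNReal.ofReal (φ t / t)) t) x := by
      intro x
      by_cases hx : 0 < x
      · rw [Set.indicator_of_mem (show x ∈ Ioi (0:ℝ) from hx), hB x hx]
      · rw [Set.indicator_of_notMem (show x ∉ Ioi (0:ℝ) from hx), hA x (le_of_not_gt hx)]
        simp
    simp_rw [this]
    rw [lintegral_indicator measurableSet_Ioi _]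
  -- replace φ by ψ inside
  have hinner : ∀ x : ℝ, (∫⁻ t in Ioi (0:ℝ),
      (Icc x (2*x)).indicator (fun t => ENNReal.ofReal (φ t / t)) t)
      = ∫⁻ t in Ioi (0:ℝ), (Icc x (2*x)).indicator (fun t => ENNReal.ofReal (ψ t / t)) t := by
    intro x
    refine lintegral_congr_ae ?_
    filter_upwards [hψe] with t ht
    simp only [Set.indicator_apply]
    split <;> simp [ht]
  -- the kernel as a function on the product
  set S : Set (ℝ × ℝ) := {p : ℝ × ℝ | p.1 ≤ p.2 ∧ p.2 ≤ 2 * p.1} with hSdef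
  have hSmeas : MeasurableSet S := by
    have : S = {p : ℝ × ℝ | p.1 ≤ p.2} ∩ {p : ℝ × ℝ | p.2 ≤ 2 * p.1} := by
      ext p; simp [hSdef, mem_setOf_eq]
    rw [this]
    exact (measurableSet_le measurable_fst measurable_snd).inter
      (measurableSet_le measurable_snd (measurable_fst.const_mul 2))
  set G : ℝ → ℝ → ℝ≥0∞ := fun x t =>
    S.indicator (fun p => ENNReal.ofReal (ψ p.2 / p.2)) (x, t) with hGdef
  have hGmeas : Measurable (Function.uncurry G) := by
    have : Function.uncurry G = S.indicator (fun p => ENNReal.ofReal (ψ p.2 / p.2)) := by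
      funext p
      simp [Function.uncurry, hGdef]
    rw [this]
    exact Measurable.indicator
      (((hψm.measurable.comp measurable_snd).div measurable_snd).ennreal_ofReal) hSmeas
  have hGeq : ∀ x t : ℝ, G x t
      = (Icc x (2*x)).indicator (fun t => ENNReal.ofReal (ψ t / t)) t := by
    intro x t
    simp only [hGdef, hSdef, Set.indicator_apply, mem_setOf_eq, mem_Icc]
  -- apply Tonelli
  have hswap : (∫⁻ x in Ioi (0:ℝ), ∫⁻ t in Ioi (0:ℝ), G x t)
      = ∫⁻ t in Ioi (0:ℝ), ∫⁻ x in Ioi (0:ℝ), G x t := by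
    exact lintegral_lintegral_swap hGmeas.aemeasurable
  -- inner integral for fixed t > 0
  have hfix : ∀ t ∈ Ioi (0:ℝ), (∫⁻ x in Ioi (0:ℝ), G x t)
      = ENNReal.ofReal (ψ t) * ENNReal.ofReal (1/2) := by
    intro t ht
    have ht' : (0:ℝ) < t := ht
    have heq : (fun x => G x t)
        = (Icc (t/2) t).indicator (fun _ => ENNReal.ofReal (ψ t / t)) := by
      funext x
      simp only [hGdef, hSdef, Set.indicator_apply, mem_setOf_eq, mem_Icc]
      have : (x ≤ t ∧ t ≤ 2 * x) ↔ (t / 2 ≤ x ∧ x ≤ t) := by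
        constructor <;> rintro ⟨h1, h2⟩ <;> constructor <;> linarith
      rw [if_congr this rfl rfl]
    rw [heq]
    have hsub : Icc (t/2) t ⊆ Ioi (0:ℝ) := fun y hy => lt_of_lt_of_le (by linarith) hy.1
    rw [lintegral_indicator measurableSet_Icc _, Measure.restrict_restrict measurableSet_Icc,
      inter_eq_self_of_subset_left hsub, setLIntegral_const, Real.volume_Icc]
    rw [← ENNReal.ofReal_mul' (by linarith : (0:ℝ) ≤ t - t/2),
      ← ENNReal.ofReal_mul' (by norm_num : (0:ℝ) ≤ (1/2:ℝ))]
    congr 1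
    field_simp
    ring
  -- put everything together
  have hkey : eLpNorm g 1 volume
      = (∫⁻ t in Ioi (0:ℝ), ENNReal.ofReal (φ t)) * ENNReal.ofReal (1/2) := by
    rw [hgnorm]
    have h1 : (∫⁻ x in Ioi (0:ℝ), ∫⁻ t in Ioi (0:ℝ),
        (Icc x (2*x)).indicator (fun t => ENNReal.ofReal (φ t / t)) t)
        = ∫⁻ x in Ioi (0:ℝ), ∫⁻ t in Ioi (0:ℝ), G x t := by
      refine lintegral_congr (fun x => ?_)
      rw [hinner x]
      refine lintegral_congr (fun t => ?_)
      rw [hGeq]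
    rw [h1, hswap]
    rw [setLIntegral_congr_fun measurableSet_Ioi hfix]
    rw [lintegral_mul_const _ (hψm.measurable.ennreal_ofReal)]
    congr 1
    refine lintegral_congr_ae ?_
    filter_upwards [hψe] with t ht
    rw [ht]
  -- use the hypothesis
  have hineq := hbd f hfint
  rw [← hgdef, hkey, hfnorm] at hineq
  have hhalf0 : ENNReal.ofReal (1/2) ≠ 0 := by
    simp [ENNReal.ofReal_eq_zero]
  have hhalft : ENNReal.ofReal (1/2) ≠ ⊤ := ENNReal.ofReal_ne_top
  have hfin : (∫⁻ t in Ioi (0:ℝ), ENNReal.ofReal (φ t)) ≤ ENNReal.ofReal C :=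
    (ENNReal.mul_le_mul_iff_left hhalf0 hhalft).1 hineq
  exact ⟨hfin, lt_of_le_of_lt hfin ENNReal.ofReal_lt_top⟩
end

section
/- Let p ∈ [1,∞) and let φ be a nonnegative locally integrable function on (0,∞) such that H_φ is bounded on L^p(ℝ) with operator norm at most C. Then ∫₀^∞ φ(t) t^{-(1-1/p)} dt ≤ C. -/
open MeasureTheory Set

open Filter
open scoped ENNReal NNReal Topology

lemma aux_int (φ : ℝ → ℝ) (hloc : LocallyIntegrableOn φ (Ioi 0) volume)
    {a b : ℝ} (ha : 0 < a) (c : ℝ) :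
    IntegrableOn (fun t => t ^ c * φ t) (Icc a b) volume := by
  have h1 : IntegrableOn φ (Icc a b) volume :=
    hloc.integrableOn_compact_subset (fun x hx => lt_of_lt_of_le ha hx.1) isCompact_Icc
  refine IntegrableOn.continuousOn_mul ?_ h1 isCompact_Icc
  intro t ht
  exact (Real.continuousAt_rpow_const t c
    (Or.inl (ne_of_gt (lt_of_lt_of_le ha ht.1)))).continuousWithinAt

set_option maxHeartbeats 1000000 in
lemma key_bound (p : ℝ) (hp : 1 ≤ p) (φ : ℝ → ℝ)
    (hφ : ∀ t ∈ Ioi (0:ℝ), 0 ≤ φ t)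
    (hloc : LocallyIntegrableOn φ (Ioi 0) volume) (C : ℝ) (hC : 0 ≤ C)
    (hbd : ∀ f : ℝ → ℂ, MemLp f (ENNReal.ofReal p) →
      eLpNorm (fun x : ℝ => ∫ t in Ioi (0:ℝ), f (x / t) * ((φ t / t : ℝ) : ℂ))
          (ENNReal.ofReal p) volume ≤
        ENNReal.ofReal C * eLpNorm f (ENNReal.ofReal p) volume)
    {ε a b : ℝ} (hε : 0 < ε) (ha : 0 < a) (hab : a ≤ b) :
    ∫ t in Icc a b, t ^ (1/p + ε - 1) * φ t ≤ C * b ^ ε := by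
  have hp0 : 0 < p := lt_of_lt_of_le one_pos hp
  have hb : 0 < b := lt_of_lt_of_le ha hab
  have hpε : 0 < p * ε := mul_pos hp0 hε
  set σ : ℝ := 1/p + ε with hσdef
  have hσ0 : 0 < σ := by positivity
  have hσp : σ * p = 1 + p * ε := by rw [hσdef, add_mul, one_div_mul_cancel hp0.ne']; ring
  set J : ℝ := ∫ t in Icc a b, t ^ (σ - 1) * φ t with hJdef
  have hJint : IntegrableOn (fun t => t ^ (σ - 1) * φ t) (Icc a b) volume :=
    aux_int φ hloc ha _
  have hnn : ∀ {s : Set ℝ}, s ⊆ Ioi 0 → MeasurableSet s →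
      (0 : ℝ → ℝ) ≤ᵐ[volume.restrict s] fun t => t ^ (σ - 1) * φ t := by
    intro s hs hsm
    refine (ae_restrict_iff' hsm).2 (ae_of_all _ fun t ht => ?_)
    have ht0 : 0 < t := hs ht
    exact mul_nonneg (Real.rpow_nonneg ht0.le _) (hφ t (hs ht))
  have hJ0 : 0 ≤ J := by
    refine setIntegral_nonneg measurableSet_Icc fun t ht => ?_
    have ht0 : 0 < t := lt_of_lt_of_le ha ht.1
    exact mul_nonneg (Real.rpow_nonneg ht0.le _) (hφ t ht0)
  have hq0 : (ENNReal.ofReal p) ≠ 0 := by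
    simp only [ne_eq, ENNReal.ofReal_eq_zero, not_le]; exact hp0
  have hqt : (ENNReal.ofReal p) ≠ ⊤ := ENNReal.ofReal_ne_top
  have hqtr : (ENNReal.ofReal p).toReal = p := ENNReal.toReal_ofReal hp0.le
  -- main claim for each truncation parameter N
  have main : ∀ N : ℝ, 1 ≤ N → b ≤ N * a →
      J ^ p * (b ^ (-(p*ε)) - (N*a) ^ (-(p*ε))) ≤ C ^ p := by
    intro N hN1 hbNa
    have hN0 : 0 < N := lt_of_lt_of_le one_pos hN1
    have hNa0 : 0 < N * a := mul_pos hN0 ha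
    have hbNa0 : 0 < b ∧ b ≤ N * a := ⟨hb, hbNa⟩
    set f : ℝ → ℂ := fun x => (((Icc (1:ℝ) N).indicator (fun y => y ^ (-σ)) x : ℝ) : ℂ) with hfdef
    have hfm : AEStronglyMeasurable f volume :=
      (Complex.measurable_ofReal.comp
        ((measurable_id'.pow_const (-σ)).indicator measurableSet_Icc)).aestronglyMeasurable
    have hnorm : ∀ x : ℝ, (‖f x‖₊ : ℝ≥0∞) ^ p
        = (Icc (1:ℝ) N).indicator (fun y => ENNReal.ofReal (y ^ (-(1+p*ε)))) x := by
      intro x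
      by_cases hx : x ∈ Icc (1:ℝ) N
      · have hx0 : 0 < x := lt_of_lt_of_le one_pos hx.1
        have hval : (x ^ (-σ)) ^ p = x ^ (-(1+p*ε)) := by
          rw [← Real.rpow_mul hx0.le]
          congr 1
          rw [← hσp]; ring
        simp only [hfdef, indicator_of_mem hx]
        rw [← enorm_eq_nnnorm, ← ofReal_norm, Complex.norm_real, Real.norm_eq_abs,
          abs_of_nonneg (Real.rpow_nonneg hx0.le _),
          ENNReal.ofReal_rpow_of_nonneg (Real.rpow_nonneg hx0.le _) hp0.le, hval]
      · simp only [hfdef, indicator_of_notMem hx, Complex.ofReal_zero, nnnorm_zero,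
          ENNReal.coe_zero]
        exact ENNReal.zero_rpow_of_pos hp0
    -- L^p norm of f
    have hlpf : ∫⁻ x, (‖f x‖₊ : ℝ≥0∞) ^ p ≤ ENNReal.ofReal (1/(p*ε)) := by
      simp only [hnorm]
      rw [lintegral_indicator measurableSet_Icc]
      have h1 : ∫⁻ x in Icc (1:ℝ) N, ENNReal.ofReal (x ^ (-(1+p*ε)))
          ≤ ∫⁻ x in Ici (1:ℝ), ENNReal.ofReal (x ^ (-(1+p*ε))) :=
        lintegral_mono_set Icc_subset_Ici_self
      have h2 : volume.restrict (Ici (1:ℝ)) = volume.restrict (Ioi (1:ℝ)) :=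
        (Measure.restrict_congr_set Ioi_ae_eq_Ici).symm
      rw [h2] at h1
      refine h1.trans ?_
      have hexp : -(1+p*ε) < -1 := by linarith
      rw [← ofReal_integral_eq_lintegral_ofReal (integrableOn_Ioi_rpow_of_lt hexp zero_lt_one)
        ((ae_restrict_iff' measurableSet_Ioi).2 (ae_of_all _ fun x hx =>
          Real.rpow_nonneg (le_of_lt (lt_trans one_pos hx)) _))]
      rw [integral_Ioi_rpow_of_lt hexp zero_lt_one]
      apply ENNReal.ofReal_le_ofReal
      rw [Real.one_rpow]
      rw [show -(1+p*ε)+1 = -(p*ε) by ring, neg_div_neg_eq]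
    have hfmem : MemLp f (ENNReal.ofReal p) volume := by
      refine ⟨hfm, ?_⟩
      rw [eLpNorm_eq_lintegral_rpow_enorm_toReal hq0 hqt, hqtr]
      exact ENNReal.rpow_lt_top_of_nonneg (by positivity)
        (ne_of_lt (lt_of_le_of_lt hlpf ENNReal.ofReal_lt_top))
    have hfn : eLpNorm f (ENNReal.ofReal p) volume ≤ ENNReal.ofReal (1/(p*ε)) ^ (1/p) := by
      rw [eLpNorm_eq_lintegral_rpow_enorm_toReal hq0 hqt, hqtr]
      exact ENNReal.rpow_le_rpow hlpf (by positivity)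
    -- pointwise lower bound for Hf on [b, N*a]
    have hH : ∀ x ∈ Icc b (N*a),
        ENNReal.ofReal (x ^ (-σ) * J)
          ≤ (‖∫ t in Ioi (0:ℝ), f (x / t) * ((φ t / t : ℝ) : ℂ)‖₊ : ℝ≥0∞) := by
      intro x hx
      have hx0 : 0 < x := lt_of_lt_of_le hb hx.1
      have hxN0 : 0 < x / N := div_pos hx0 hN0
      have hIint : IntegrableOn (fun t => t ^ (σ - 1) * φ t) (Icc (x/N) x) volume :=
        aux_int φ hloc hxN0 _
      have hstep1 : (∫ t in Ioi (0:ℝ), f (x / t) * ((φ t / t : ℝ) : ℂ))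
          = ((x ^ (-σ) * ∫ t in Icc (x/N) x, t ^ (σ - 1) * φ t : ℝ) : ℂ) := by
        have hcong : ∀ t ∈ Ioi (0:ℝ), f (x / t) * ((φ t / t : ℝ) : ℂ)
            = (((Icc (x/N) x).indicator (fun t => x ^ (-σ) * (t ^ (σ - 1) * φ t)) t : ℝ) : ℂ) := by
          intro t ht
          have ht0 : 0 < t := ht
          rw [hfdef]
          rw [← Complex.ofReal_mul]
          congr 1
          by_cases ht' : t ∈ Icc (x/N) x
          · have hmem : x / t ∈ Icc (1:ℝ) N := by
              constructor
              · rw [le_div_iff₀ ht0, one_mul]; exact ht'.2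
              · rw [div_le_iff₀ ht0]
                calc x ≤ N * (x/N) := by rw [mul_div_cancel₀ _ hN0.ne']
                _ ≤ N * t := by
                    exact mul_le_mul_of_nonneg_left ht'.1 hN0.le
            rw [indicator_of_mem hmem, indicator_of_mem ht']
            have e1 : t ^ (σ - 1) = t ^ σ / t := Real.rpow_sub_one ht0.ne' σ
            have e2 : (x/t) ^ (-σ) = x ^ (-σ) * t ^ σ := by
              rw [Real.div_rpow hx0.le ht0.le, Real.rpow_neg ht0.le, div_eq_mul_inv, inv_inv]
            rw [e1, e2]
            field_simp
          · have hmem : x / t ∉ Icc (1:ℝ) N := by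
              intro hmem
              obtain ⟨hm1, hm2⟩ := hmem
              rw [le_div_iff₀ ht0, one_mul] at hm1
              rw [div_le_iff₀ ht0] at hm2
              refine ht' ⟨?_, hm1⟩
              rw [div_le_iff₀ hN0]
              nlinarith
            rw [indicator_of_notMem hmem, indicator_of_notMem ht']
            simp
        rw [setIntegral_congr_fun measurableSet_Ioi hcong]
        rw [show (fun t => (((Icc (x/N) x).indicator (fun t => x ^ (-σ) * (t ^ (σ - 1) * φ t)) t : ℝ) : ℂ)) = (fun t => ((RCLike.ofReal ((Icc (x/N) x).indicator (fun t => x ^ (-σ) * (t ^ (σ - 1) * φ t)) t)) : ℂ)) from rfl, integral_ofReal]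
        congr 1
        rw [setIntegral_indicator measurableSet_Icc]
        have hss : Ioi (0:ℝ) ∩ Icc (x/N) x = Icc (x/N) x := by
          apply inter_eq_right.2
          intro t ht
          exact lt_of_lt_of_le hxN0 ht.1
        rw [hss, integral_const_mul]
        rfl
      have hmono : x ^ (-σ) * J ≤ x ^ (-σ) * ∫ t in Icc (x/N) x, t ^ (σ - 1) * φ t := by
        apply mul_le_mul_of_nonneg_left _ (Real.rpow_nonneg hx0.le _)
        apply setIntegral_mono_set hIint (hnn (fun t ht => lt_of_lt_of_le hxN0 ht.1) measurableSet_Icc)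
        apply HasSubset.Subset.eventuallyLE
        apply Icc_subset_Icc
        · rw [div_le_iff₀ hN0]
          nlinarith [hx.2]
        · exact hx.1
      rw [hstep1, ← enorm_eq_nnnorm, ← ofReal_norm, Complex.norm_real, Real.norm_eq_abs]
      exact ENNReal.ofReal_le_ofReal (hmono.trans (le_abs_self _))
    -- lower bound for the L^p norm of Hf
    have hIccint : IntegrableOn (fun x : ℝ => x ^ (-(1+p*ε))) (Icc b (N*a)) volume := by
      apply ContinuousOn.integrableOn_Icc
      intro y hy
      exact (Real.continuousAt_rpow_const y _
        (Or.inl (ne_of_gt (lt_of_lt_of_le hb hy.1)))).continuousWithinAt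
    have hIccval : ∫ x in Icc b (N*a), x ^ (-(1+p*ε))
        = (b ^ (-(p*ε)) - (N*a) ^ (-(p*ε)))/(p*ε) := by
      rw [integral_Icc_eq_integral_Ioc, ← intervalIntegral.integral_of_le hbNa]
      rw [integral_rpow (Or.inr ⟨by intro h; nlinarith,
        notMem_uIcc_of_lt hb hNa0⟩)]
      rw [show -(1+p*ε)+1 = -(p*ε) by ring]
      rw [div_eq_div_iff (by simpa using hpε.ne') hpε.ne']
      ring
    have hlow : ENNReal.ofReal (J ^ p * ((b ^ (-(p*ε)) - (N*a) ^ (-(p*ε)))/(p*ε)))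
        ≤ ∫⁻ x, (‖(∫ t in Ioi (0:ℝ), f (x / t) * ((φ t / t : ℝ) : ℂ))‖₊ : ℝ≥0∞) ^ p := by
      have step1 : ∫⁻ x in Icc b (N*a), ENNReal.ofReal (J ^ p * x ^ (-(1+p*ε)))
          ≤ ∫⁻ x, (‖(∫ t in Ioi (0:ℝ), f (x / t) * ((φ t / t : ℝ) : ℂ))‖₊ : ℝ≥0∞) ^ p := by
        refine le_trans (setLIntegral_mono' measurableSet_Icc fun x hx => ?_)
          (setLIntegral_le_lintegral _ _)
        have hx0 : 0 < x := lt_of_lt_of_le hb hx.1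
        have e : J ^ p * x ^ (-(1+p*ε)) = (x ^ (-σ) * J) ^ p := by
          rw [Real.mul_rpow (Real.rpow_nonneg hx0.le _) hJ0, ← Real.rpow_mul hx0.le]
          rw [show -σ * p = -(1+p*ε) by rw [← hσp]; ring]
          ring
        rw [e, ← ENNReal.ofReal_rpow_of_nonneg (mul_nonneg (Real.rpow_nonneg hx0.le _) hJ0) hp0.le]
        exact ENNReal.rpow_le_rpow (hH x hx) hp0.le
      refine le_trans (le_of_eq ?_) step1
      calc ENNReal.ofReal (J ^ p * ((b ^ (-(p*ε)) - (N*a) ^ (-(p*ε)))/(p*ε)))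
          = ENNReal.ofReal (J^p) * ENNReal.ofReal ((b ^ (-(p*ε)) - (N*a) ^ (-(p*ε)))/(p*ε)) :=
            ENNReal.ofReal_mul (Real.rpow_nonneg hJ0 _)
        _ = ENNReal.ofReal (J^p) * ∫⁻ x in Icc b (N*a), ENNReal.ofReal (x ^ (-(1+p*ε))) := by
            rw [← hIccval, ofReal_integral_eq_lintegral_ofReal hIccint
              ((ae_restrict_iff' measurableSet_Icc).2 (ae_of_all _ fun y hy =>
                Real.rpow_nonneg (le_of_lt (lt_of_lt_of_le hb hy.1)) _))]
        _ = ∫⁻ x in Icc b (N*a), ENNReal.ofReal (J^p) * ENNReal.ofReal (x ^ (-(1+p*ε))) :=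
            (lintegral_const_mul' _ _ ENNReal.ofReal_ne_top).symm
        _ = ∫⁻ x in Icc b (N*a), ENNReal.ofReal (J^p * x ^ (-(1+p*ε))) := by
            refine setLIntegral_congr_fun measurableSet_Icc (fun y hy => ?_)
            rw [← ENNReal.ofReal_mul (Real.rpow_nonneg hJ0 _)]
    -- combine with the operator norm bound
    have hup := hbd f hfmem
    have heq : (∫⁻ x, (‖(∫ t in Ioi (0:ℝ), f (x / t) * ((φ t / t : ℝ) : ℂ))‖₊ : ℝ≥0∞) ^ p) ^ (1/p)
        = eLpNorm (fun x : ℝ => ∫ t in Ioi (0:ℝ), f (x / t) * ((φ t / t : ℝ) : ℂ))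
            (ENNReal.ofReal p) volume := by
      rw [eLpNorm_eq_lintegral_rpow_enorm_toReal hq0 hqt, hqtr]
      rfl
    have hchain : (ENNReal.ofReal (J ^ p * ((b ^ (-(p*ε)) - (N*a) ^ (-(p*ε)))/(p*ε)))) ^ (1/p)
        ≤ ENNReal.ofReal C * ENNReal.ofReal (1/(p*ε)) ^ (1/p) := by
      refine le_trans (ENNReal.rpow_le_rpow hlow (by positivity)) ?_
      rw [heq]
      exact le_trans hup (mul_le_mul_right hfn _)
    have hrn : J ^ p * ((b ^ (-(p*ε)) - (N*a) ^ (-(p*ε)))/(p*ε)) ≤ C ^ p * (1/(p*ε)) := by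
      have h1 := ENNReal.rpow_le_rpow hchain hp0.le
      rw [← ENNReal.rpow_mul, one_div_mul_cancel hp0.ne', ENNReal.rpow_one] at h1
      rw [ENNReal.mul_rpow_of_nonneg _ _ hp0.le, ← ENNReal.rpow_mul,
        one_div_mul_cancel hp0.ne', ENNReal.rpow_one,
        ENNReal.ofReal_rpow_of_nonneg hC hp0.le] at h1
      rw [← ENNReal.ofReal_mul (by positivity)] at h1
      exact (ENNReal.ofReal_le_ofReal_iff (by positivity)).1 h1
    have hmul := mul_le_mul_of_nonneg_right hrn hpε.le
    calc J ^ p * (b ^ (-(p*ε)) - (N*a) ^ (-(p*ε)))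
        = J ^ p * ((b ^ (-(p*ε)) - (N*a) ^ (-(p*ε)))/(p*ε)) * (p*ε) := by
          field_simp
      _ ≤ C ^ p * (1/(p*ε)) * (p*ε) := hmul
      _ = C ^ p := by field_simp
  -- let N → ∞
  have hNlim : J ^ p * b ^ (-(p*ε)) ≤ C ^ p := by
    set N0 : ℝ := max 1 (b/a) with hN0def
    have hseq : ∀ n : ℕ, J ^ p * (b ^ (-(p*ε)) - (((n:ℝ) + N0) * a) ^ (-(p*ε))) ≤ C ^ p := by
      intro n
      refine main _ (le_add_of_nonneg_of_le (Nat.cast_nonneg n) (le_max_left _ _)) ?_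
      have h1 : b / a ≤ (n:ℝ) + N0 :=
        le_add_of_nonneg_of_le (Nat.cast_nonneg n) (le_max_right _ _)
      rw [div_le_iff₀ ha] at h1
      linarith
    have h1 : Tendsto (fun n : ℕ => ((n:ℝ) + N0) * a) atTop atTop := by
      apply Tendsto.atTop_mul_const ha
      exact tendsto_atTop_add_const_right atTop N0 tendsto_natCast_atTop_atTop
    have h2 : Tendsto (fun n : ℕ => (((n:ℝ) + N0) * a) ^ (-(p*ε))) atTop (𝓝 0) :=
      (tendsto_rpow_neg_atTop hpε).comp h1
    have htend : Tendsto (fun n : ℕ => J ^ p * (b ^ (-(p*ε)) - (((n:ℝ) + N0) * a) ^ (-(p*ε))))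
        atTop (𝓝 (J ^ p * (b ^ (-(p*ε)) - 0))) :=
      ((tendsto_const_nhds.sub h2)).const_mul _
    have hfin := le_of_tendsto htend (Eventually.of_forall hseq)
    simpa using hfin
  -- conclude
  have hbpε : 0 < b ^ (p*ε) := Real.rpow_pos_of_pos hb _
  have h2 : J ^ p ≤ (C * b ^ ε) ^ p := by
    rw [Real.mul_rpow hC (Real.rpow_nonneg hb.le _), ← Real.rpow_mul hb.le,
      show ε * p = p * ε by ring]
    rw [Real.rpow_neg hb.le] at hNlim
    calc J ^ p = J ^ p * (b^(p*ε))⁻¹ * b^(p*ε) := by field_simp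
      _ ≤ C ^ p * b^(p*ε) := mul_le_mul_of_nonneg_right hNlim hbpε.le
  exact (Real.rpow_le_rpow_iff hJ0 (by positivity) hp0).1 h2

set_option maxHeartbeats 1000000 in
/-- If p ∈ [1,∞), φ ≥ 0 is locally integrable on (0,∞) and H_φ is bounded on
L^p(ℝ) with operator norm at most C, then ∫₀^∞ φ(t) t^{-(1-1/p)} dt ≤ C. -/
theorem hausdorff_Lp_necessary (p : ℝ) (hp : 1 ≤ p) (φ : ℝ → ℝ)
    (hφ : ∀ t ∈ Ioi (0:ℝ), 0 ≤ φ t)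
    (hloc : LocallyIntegrableOn φ (Ioi 0)) (C : ℝ) (hC : 0 ≤ C)
    (hbd : ∀ f : ℝ → ℂ, MemLp f (ENNReal.ofReal p) →
      eLpNorm (fun x : ℝ => ∫ t in Ioi (0:ℝ), f (x / t) * ((φ t / t : ℝ) : ℂ))
          (ENNReal.ofReal p) volume ≤
        ENNReal.ofReal C * eLpNorm f (ENNReal.ofReal p) volume) :
    (∫⁻ t in Ioi (0:ℝ), ENNReal.ofReal (φ t / t ^ (1 - 1 / p))) ≤ ENNReal.ofReal C := by
  have hp0 : 0 < p := lt_of_lt_of_le one_pos hp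
  -- rewrite the integrand
  have hgoal_eq : (∫⁻ t in Ioi (0:ℝ), ENNReal.ofReal (φ t / t ^ (1 - 1 / p)))
      = ∫⁻ t in Ioi (0:ℝ), ENNReal.ofReal (t ^ (1/p - 1) * φ t) := by
    refine setLIntegral_congr_fun measurableSet_Ioi (fun t ht => ?_)
    congr 1
    rw [show (1:ℝ)/p - 1 = -(1 - 1/p) by ring, Real.rpow_neg (le_of_lt ht),
      div_eq_mul_inv, mul_comm]
  rw [hgoal_eq]
  -- per-shell bound
  have hshell : ∀ n : ℕ, (∫⁻ t in Ioc (1/((n:ℝ)+1)) ((n:ℝ)+1),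
      ENNReal.ofReal (t ^ (1/p - 1) * φ t)) ≤ ENNReal.ofReal C := by
    intro n
    set a : ℝ := 1/((n:ℝ)+1) with hadef
    set b : ℝ := (n:ℝ)+1 with hbdef
    have ha : 0 < a := by positivity
    have hb1 : 1 ≤ b := by simp [hbdef]
    have hab : a ≤ b := by
      rw [hadef]
      calc 1/((n:ℝ)+1) ≤ 1 := by
            rw [div_le_one (by positivity)]; simp
        _ ≤ b := hb1
    have hb : 0 < b := lt_of_lt_of_le ha hab
    have hsub : Ioc a b ⊆ Ioi 0 := fun t ht => lt_trans ha ht.1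
    have hφae : AEMeasurable φ (volume.restrict (Ioc a b)) :=
      (hloc.aestronglyMeasurable.aemeasurable).mono_measure
        (Measure.restrict_mono hsub le_rfl)
    set G : ℕ → ℝ → ℝ≥0∞ := fun k t =>
      ENNReal.ofReal (t ^ (1/p + 1/((k:ℝ)+1) - 1) * φ t) with hGdef
    have hGm : ∀ k, AEMeasurable (G k) (volume.restrict (Ioc a b)) := fun k =>
      ENNReal.measurable_ofReal.comp_aemeasurable
        (((measurable_id'.pow_const _).aemeasurable).mul hφae)
    have hpt : ∀ᵐ t ∂(volume.restrict (Ioc a b)),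
        ENNReal.ofReal (t ^ (1/p - 1) * φ t) ≤ atTop.liminf fun k => G k t := by
      refine (ae_restrict_iff' measurableSet_Ioc).2 (ae_of_all _ fun t ht => ?_)
      have ht0 : 0 < t := lt_trans ha ht.1
      have htend : Tendsto (fun k : ℕ => G k t) atTop
          (𝓝 (ENNReal.ofReal (t ^ (1/p - 1) * φ t))) := by
        have h1 : Tendsto (fun k : ℕ => 1/p + 1/((k:ℝ)+1) - 1) atTop (𝓝 (1/p - 1)) := by
          have := (tendsto_one_div_add_atTop_nhds_zero_nat).const_add (1/p)
          have h2 := this.sub_const 1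
          simpa using h2
        have h2 : Tendsto (fun k : ℕ => t ^ (1/p + 1/((k:ℝ)+1) - 1)) atTop
            (𝓝 (t ^ (1/p - 1))) :=
          (Real.continuousAt_const_rpow ht0.ne').tendsto.comp h1
        exact (ENNReal.continuous_ofReal.tendsto _).comp (h2.mul_const (φ t))
      rw [htend.liminf_eq]
    have hband : ∀ k : ℕ, (∫⁻ t in Ioc a b, G k t)
        ≤ ENNReal.ofReal (C * b ^ (1/((k:ℝ)+1))) := by
      intro k
      have hεk : 0 < 1/((k:ℝ)+1) := by positivity
      have hkey := key_bound p hp φ hφ hloc C hC hbd hεk ha hab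
      have hint : IntegrableOn (fun t => t ^ (1/p + 1/((k:ℝ)+1) - 1) * φ t) (Icc a b) volume :=
        aux_int φ hloc ha _
      refine le_trans (lintegral_mono_set Ioc_subset_Icc_self) ?_
      rw [hGdef]
      rw [← ofReal_integral_eq_lintegral_ofReal hint
        ((ae_restrict_iff' measurableSet_Icc).2 (ae_of_all _ fun t ht =>
          mul_nonneg (Real.rpow_nonneg (le_of_lt (lt_of_lt_of_le ha ht.1)) _)
            (hφ t (lt_of_lt_of_le ha ht.1))))]
      exact ENNReal.ofReal_le_ofReal hkey
    have hblim : Tendsto (fun k : ℕ => ENNReal.ofReal (C * b ^ (1/((k:ℝ)+1)))) atTop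
        (𝓝 (ENNReal.ofReal C)) := by
      have h1 : Tendsto (fun k : ℕ => 1/((k:ℝ)+1)) atTop (𝓝 0) :=
        tendsto_one_div_add_atTop_nhds_zero_nat
      have h2 : Tendsto (fun k : ℕ => b ^ (1/((k:ℝ)+1))) atTop (𝓝 1) := by
        have := (Real.continuousAt_const_rpow hb.ne').tendsto.comp h1
        simpa [Function.comp_def] using this
      have h3 : Tendsto (fun k : ℕ => C * b ^ (1/((k:ℝ)+1))) atTop (𝓝 C) := by
        have := h2.const_mul C
        simpa using this
      exact (ENNReal.continuous_ofReal.tendsto _).comp h3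
    calc (∫⁻ t in Ioc a b, ENNReal.ofReal (t ^ (1/p - 1) * φ t))
        ≤ ∫⁻ t in Ioc a b, atTop.liminf fun k => G k t := lintegral_mono_ae hpt
      _ ≤ atTop.liminf fun k => ∫⁻ t in Ioc a b, G k t := lintegral_liminf_le' hGm
      _ ≤ atTop.liminf fun k : ℕ => ENNReal.ofReal (C * b ^ (1/((k:ℝ)+1))) :=
          liminf_le_liminf (Eventually.of_forall hband)
      _ = ENNReal.ofReal C := hblim.liminf_eq
  -- monotone limit over shells
  obtain ⟨ψ, hψm, hψ⟩ := hloc.aestronglyMeasurable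
  have hψ' : ∀ᵐ t ∂(volume.restrict (Ioi (0:ℝ))),
      ENNReal.ofReal (t ^ (1/p - 1) * φ t) = ENNReal.ofReal (t ^ (1/p - 1) * ψ t) :=
    hψ.mono fun t h => by rw [h]
  set F : ℕ → ℝ → ℝ≥0∞ := fun n =>
    (Ioc (1/((n:ℝ)+1)) ((n:ℝ)+1)).indicator
      (fun t => ENNReal.ofReal (t ^ (1/p - 1) * ψ t)) with hFdef
  have hFmeas : ∀ n, Measurable (F n) := fun n =>
    (((measurable_id'.pow_const _).mul hψm.measurable).ennreal_ofReal).indicator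
      measurableSet_Ioc
  have hsets : Monotone fun n : ℕ => Ioc (1/((n:ℝ)+1)) ((n:ℝ)+1) := by
    intro m n hmn
    apply Ioc_subset_Ioc
    · apply one_div_le_one_div_of_le (by positivity)
      have : (m:ℝ) ≤ n := Nat.cast_le.2 hmn
      linarith
    · have : (m:ℝ) ≤ n := Nat.cast_le.2 hmn
      linarith
  have hFmono : Monotone F := fun m n hmn =>
    indicator_le_indicator_of_subset (hsets hmn) (fun t => zero_le)
  have hFsup : ∀ t, (⨆ n, F n t)
      = (Ioi (0:ℝ)).indicator (fun t => ENNReal.ofReal (t ^ (1/p - 1) * ψ t)) t := by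
    intro t
    by_cases ht : 0 < t
    · rw [indicator_of_mem (show t ∈ Ioi (0:ℝ) from ht)]
      apply le_antisymm
      · exact iSup_le fun n => indicator_le_self _ _ t
      · obtain ⟨n, hn⟩ := exists_nat_gt (max (1/t) t)
        have hn1 : 1/((n:ℝ)+1) < t := by
          rw [div_lt_iff₀ (by positivity)]
          have h1 : 1/t < (n:ℝ) + 1 := lt_trans (lt_of_le_of_lt (le_max_left _ _) hn)
            (lt_add_one _)
          rw [div_lt_iff₀ ht] at h1
          linarith
        have hn2 : t ≤ (n:ℝ)+1 := le_of_lt (lt_trans (lt_of_le_of_lt (le_max_right _ _) hn)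
          (lt_add_one _))
        refine le_iSup_of_le n ?_
        rw [hFdef]
        simp only [indicator_of_mem (mem_Ioc.2 ⟨hn1, hn2⟩)]
        exact le_rfl
    · have h0 : ∀ n, F n t = 0 := fun n =>
        indicator_of_notMem (fun hmem => ht (lt_trans (by positivity) hmem.1)) _
      rw [indicator_of_notMem (show t ∉ Ioi (0:ℝ) from ht)]
      simp [h0]
  calc (∫⁻ t in Ioi (0:ℝ), ENNReal.ofReal (t ^ (1/p - 1) * φ t))
      = ∫⁻ t in Ioi (0:ℝ), ENNReal.ofReal (t ^ (1/p - 1) * ψ t) := lintegral_congr_ae hψ'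
    _ = ∫⁻ t, (Ioi (0:ℝ)).indicator (fun t => ENNReal.ofReal (t ^ (1/p - 1) * ψ t)) t :=
        (lintegral_indicator measurableSet_Ioi _).symm
    _ = ∫⁻ t, ⨆ n, F n t := by
        refine lintegral_congr fun t => ?_
        rw [hFsup]
    _ = ⨆ n, ∫⁻ t, F n t := lintegral_iSup hFmeas hFmono
    _ ≤ ENNReal.ofReal C := by
        refine iSup_le fun n => ?_
        rw [hFdef]
        rw [lintegral_indicator measurableSet_Ioc]
        have hsub : Ioc (1/((n:ℝ)+1)) ((n:ℝ)+1) ⊆ Ioi (0:ℝ) := fun t ht =>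
          lt_trans (by positivity) ht.1
        have hcong : (∫⁻ t in Ioc (1/((n:ℝ)+1)) ((n:ℝ)+1),
            ENNReal.ofReal (t ^ (1/p - 1) * ψ t))
            = ∫⁻ t in Ioc (1/((n:ℝ)+1)) ((n:ℝ)+1),
              ENNReal.ofReal (t ^ (1/p - 1) * φ t) :=
          lintegral_congr_ae (ae_restrict_of_ae_restrict_of_subset hsub (hψ'.mono fun t h => h.symm))
        rw [hcong]
        exact hshell n
end

section
/- Let p ∈ [1,∞) and let φ be a nonnegative locally integrable function on (0,∞). Then H_φ is bounded on L^p(ℝ) if and only if ∫₀^∞ φ(t) t^{-(1-1/p)} dt < ∞, and in that case the operator norm of H_φ on L^p(ℝ) equals ∫₀^∞ φ(t) t^{-(1-1/p)} dt. -/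
open MeasureTheory Set

section HausdorffAux
open ENNReal Filter


lemma lint_comp_div (g : ℝ → ℝ≥0∞) (hg : Measurable g) {t : ℝ} (ht : 0 < t) :
    ∫⁻ x, g (x / t) = ENNReal.ofReal t * ∫⁻ x, g x := by
  have h1 : (fun x : ℝ => g (x / t)) = fun x => g (x * t⁻¹) := by
    simp [div_eq_mul_inv]
  rw [h1, ← lintegral_map hg (measurable_mul_const t⁻¹),
    Real.map_volume_mul_right (inv_ne_zero ht.ne'), lintegral_smul_measure, inv_inv,
    abs_of_pos ht, smul_eq_mul]

-- null slices
lemma ae_ae_div {N : Set ℝ} (hN : volume N = 0) :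
    ∀ᵐ x : ℝ, ∀ᵐ t ∂(volume.restrict (Ioi (0:ℝ))), x / t ∉ N := by
  obtain ⟨N', hNN', hN'm, hN'0⟩ := exists_measurable_superset_of_null hN
  have key : (volume.prod (volume.restrict (Ioi (0:ℝ))))
      {p : ℝ × ℝ | p.1 / p.2 ∈ N'} = 0 := by
    have hmeas : MeasurableSet {p : ℝ × ℝ | p.1 / p.2 ∈ N'} :=
      (measurable_fst.div measurable_snd) hN'm
    rw [← Measure.prod_swap, Measure.map_apply measurable_swap hmeas]
    have hmeas2 : MeasurableSet {p : ℝ × ℝ | p.2 / p.1 ∈ N'} :=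
      (measurable_snd.div measurable_fst) hN'm
    rw [show Prod.swap ⁻¹' {p : ℝ × ℝ | p.1 / p.2 ∈ N'} = {p : ℝ × ℝ | p.2 / p.1 ∈ N'} from rfl]
    rw [Measure.measure_prod_null hmeas2]
    filter_upwards [ae_restrict_mem measurableSet_Ioi] with t ht
    have : Prod.mk t ⁻¹' {p : ℝ × ℝ | p.2 / p.1 ∈ N'} = (· / t) ⁻¹' N' := rfl
    rw [this]
    have : (· / t) ⁻¹' N' = (· * t⁻¹) ⁻¹' N' := by ext x; simp [div_eq_mul_inv]
    rw [this, Real.volume_preimage_mul_right (inv_ne_zero (ne_of_gt ht)), hN'0, mul_zero]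
    simp
  have := (Measure.measure_prod_null
    ((measurable_fst.div measurable_snd) hN'm)).mp key
  filter_upwards [this] with x hx
  simp only [Pi.zero_apply] at hx
  have h2 : ∀ᵐ t ∂(volume.restrict (Ioi (0:ℝ))), x / t ∉ N' := by
    rw [ae_iff]
    convert hx using 2
    ext t; simp
  filter_upwards [h2] with t ht hmem; exact ht (hNN' hmem)

lemma upper_lintegral {p : ℝ} (hp : 1 ≤ p) {φ : ℝ → ℝ} (hφm : Measurable φ)
    (g : ℝ → ℝ≥0∞) (hg : Measurable g) :
    ∫⁻ x, (∫⁻ t in Ioi (0:ℝ), g (x / t) * ENNReal.ofReal (φ t / t)) ^ p ≤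
      ((∫⁻ t in Ioi (0:ℝ), ENNReal.ofReal (φ t / t ^ (1 - 1/p))) ^ p) * ∫⁻ x, g x ^ p := by
  set w : ℝ → ℝ≥0∞ := fun t => ENNReal.ofReal (φ t / t) with hw
  set Kl : ℝ≥0∞ := ∫⁻ t in Ioi (0:ℝ), ENNReal.ofReal (φ t / t ^ (1 - 1/p)) with hKl
  have hwm : Measurable w := (hφm.div measurable_id).ennreal_ofReal
  have hp0 : (0:ℝ) < p := lt_of_lt_of_le one_pos hp
  -- key identity : for t > 0, w t * (ofReal t) ^ (1/p) = ofReal (φ t / t ^ (1 - 1/p))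
  have hkey : ∀ t ∈ Ioi (0:ℝ), w t * (ENNReal.ofReal t) ^ (1/p : ℝ)
      = ENNReal.ofReal (φ t / t ^ (1 - 1/p)) := by
    intro t ht
    rw [ENNReal.ofReal_rpow_of_pos ht, ← ENNReal.ofReal_mul' (Real.rpow_nonneg ht.le _)]
    congr 1
    rw [Real.rpow_sub ht, Real.rpow_one]
    field_simp
  rcases eq_or_lt_of_le hp with hp1 | hp1
  · -- p = 1
    subst hp1
    simp only [ENNReal.rpow_one]
    have hswap : ∫⁻ x, ∫⁻ t in Ioi (0:ℝ), g (x / t) * w t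
        = ∫⁻ t in Ioi (0:ℝ), ∫⁻ x, g (x / t) * w t := by
      apply lintegral_lintegral_swap
      exact ((hg.comp (measurable_fst.div measurable_snd)).mul
        (hwm.comp measurable_snd)).aemeasurable
    rw [hswap]
    have : ∀ᵐ t ∂(volume.restrict (Ioi (0:ℝ))),
        (∫⁻ x, g (x / t) * w t) = ENNReal.ofReal (φ t / t ^ (1 - 1/(1:ℝ))) * ∫⁻ x, g x := by
      filter_upwards [ae_restrict_mem measurableSet_Ioi] with t ht
      rw [lintegral_mul_const' _ _ (by simp [hw]), lint_comp_div g hg ht]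
      rw [← hkey t ht]
      simp only [one_div, inv_one, ENNReal.rpow_one]
      ring
    have hm1 : Measurable fun t : ℝ => ENNReal.ofReal (φ t / t ^ (1 - 1/(1:ℝ))) := by
      exact (hφm.div ((measurable_id.pow_const _))).ennreal_ofReal
    rw [lintegral_congr_ae this, lintegral_mul_const _ hm1]
  · -- 1 < p
    set q : ℝ := p / (p - 1) with hq
    have hpq : p.HolderConjugate q := Real.HolderConjugate.conjExponent hp1
    have hq0 : (0:ℝ) < q := hpq.symm.pos
    set τ : ℝ → ℝ≥0∞ := fun t => ENNReal.ofReal t with hτ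
    set c : ℝ := 1 / (p * q) with hc
    set m : ℝ → ℝ≥0∞ := fun t => w t * τ t ^ (-(1/q) : ℝ) with hm
    have hmm : Measurable m := hwm.mul (measurable_id.ennreal_ofReal.pow_const _)
    -- pointwise Hölder
    have hpoint : ∀ x : ℝ, (∫⁻ t in Ioi (0:ℝ), g (x / t) * w t)
        ≤ (∫⁻ t in Ioi (0:ℝ), g (x / t) ^ p * m t) ^ (1/p) * Kl ^ (1/q) := by
      intro x
      have hAB : ∀ t ∈ Ioi (0:ℝ), g (x / t) * w t
          = ((g (x / t) * w t ^ (1/p : ℝ)) * τ t ^ (-c : ℝ))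
            * (w t ^ (1/q : ℝ) * τ t ^ (c : ℝ)) := by
        intro t ht
        have hτne : τ t ≠ 0 := by simp [hτ, ht.out]
        have hτtop : τ t ≠ ⊤ := by simp [hτ]
        have h1 : w t ^ (1/p : ℝ) * w t ^ (1/q : ℝ) = w t := by
          rw [← ENNReal.rpow_add_of_nonneg _ _ (by positivity) (by positivity), one_div,
            one_div, hpq.inv_add_inv_eq_one, ENNReal.rpow_one]
        have h2 : τ t ^ (-c : ℝ) * τ t ^ (c : ℝ) = 1 := by
          rw [← ENNReal.rpow_add _ _ hτne hτtop, neg_add_cancel, ENNReal.rpow_zero]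
        calc g (x / t) * w t = g (x / t) * (w t ^ (1/p : ℝ) * w t ^ (1/q : ℝ))
              * (τ t ^ (-c : ℝ) * τ t ^ (c : ℝ)) := by rw [h1, h2, mul_one]
          _ = _ := by ring
      rw [setLIntegral_congr_fun measurableSet_Ioi hAB]
      have hgt : Measurable fun t : ℝ => g (x / t) :=
        hg.comp (measurable_const.div measurable_id)
      have hτm : Measurable τ := measurable_id.ennreal_ofReal
      have hH := ENNReal.lintegral_mul_le_Lp_mul_Lq (volume.restrict (Ioi (0:ℝ))) hpq
        (f := fun t => g (x / t) * w t ^ (1/p : ℝ) * τ t ^ (-c : ℝ))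
        (g := fun t => w t ^ (1/q : ℝ) * τ t ^ (c : ℝ))
        (((hgt.mul (hwm.pow_const _)).mul (hτm.pow_const _)).aemeasurable)
        ((hwm.pow_const _).mul (hτm.pow_const _)).aemeasurable
      refine hH.trans ?_
      have e1 : ∀ᵐ t ∂(volume.restrict (Ioi (0:ℝ))),
          (g (x / t) * w t ^ (1/p : ℝ) * τ t ^ (-c : ℝ)) ^ p
            = g (x / t) ^ p * m t := by
        filter_upwards [ae_restrict_mem measurableSet_Ioi] with t ht
        rw [ENNReal.mul_rpow_of_nonneg _ _ hp0.le, ENNReal.mul_rpow_of_nonneg _ _ hp0.le,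
          ← ENNReal.rpow_mul, ← ENNReal.rpow_mul]
        have : (1/p) * p = (1:ℝ) := by field_simp
        rw [this, ENNReal.rpow_one]
        have : (-c) * p = -(1/q) := by rw [hc]; field_simp
        rw [this, hm, mul_assoc]
      have e2 : ∀ᵐ t ∂(volume.restrict (Ioi (0:ℝ))),
          (w t ^ (1/q : ℝ) * τ t ^ (c : ℝ)) ^ q
            = ENNReal.ofReal (φ t / t ^ (1 - 1/p)) := by
        filter_upwards [ae_restrict_mem measurableSet_Ioi] with t ht
        rw [ENNReal.mul_rpow_of_nonneg _ _ hq0.le, ← ENNReal.rpow_mul, ← ENNReal.rpow_mul]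
        have h1 : (1/q) * q = (1:ℝ) := by field_simp
        have h2 : c * q = 1/p := by rw [hc]; field_simp
        rw [h1, h2, ENNReal.rpow_one, hkey t ht]
      rw [lintegral_congr_ae e1, lintegral_congr_ae e2]
    -- raise pointwise bound to the p-th power and integrate
    have hpoint2 : ∀ x : ℝ, (∫⁻ t in Ioi (0:ℝ), g (x / t) * w t) ^ p
        ≤ (∫⁻ t in Ioi (0:ℝ), g (x / t) ^ p * m t) * Kl ^ (p/q : ℝ) := by
      intro x
      have := ENNReal.rpow_le_rpow (hpoint x) hp0.le
      refine this.trans (le_of_eq ?_)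
      rw [ENNReal.mul_rpow_of_nonneg _ _ hp0.le, ← ENNReal.rpow_mul, ← ENNReal.rpow_mul]
      have h1 : (1/p) * p = (1:ℝ) := by field_simp
      have h2 : (1/q) * p = p/q := by field_simp
      rw [h1, h2, ENNReal.rpow_one]
    calc ∫⁻ x, (∫⁻ t in Ioi (0:ℝ), g (x / t) * w t) ^ p
        ≤ ∫⁻ x, (∫⁻ t in Ioi (0:ℝ), g (x / t) ^ p * m t) * Kl ^ (p/q : ℝ) :=
          lintegral_mono hpoint2
      _ = (∫⁻ x, ∫⁻ t in Ioi (0:ℝ), g (x / t) ^ p * m t) * Kl ^ (p/q : ℝ) := by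
          rw [lintegral_mul_const'' _ ?hmeas]
          case hmeas =>
            apply Measurable.aemeasurable
            apply Measurable.lintegral_prod_right (f := fun x t => g (x / t) ^ p * m t)
            exact ((hg.comp (measurable_fst.div measurable_snd)).pow_const _).mul
              (hmm.comp measurable_snd)
      _ = (∫⁻ t in Ioi (0:ℝ), ∫⁻ x, g (x / t) ^ p * m t) * Kl ^ (p/q : ℝ) := by
          rw [lintegral_lintegral_swap]
          exact (((hg.comp (measurable_fst.div measurable_snd)).pow_const _).mul
            (hmm.comp measurable_snd)).aemeasurable
      _ = (Kl * ∫⁻ x, g x ^ p) * Kl ^ (p/q : ℝ) := by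
          congr 1
          have : ∀ᵐ t ∂(volume.restrict (Ioi (0:ℝ))),
              (∫⁻ x, g (x / t) ^ p * m t)
                = ENNReal.ofReal (φ t / t ^ (1 - 1/p)) * ∫⁻ x, g x ^ p := by
            filter_upwards [ae_restrict_mem measurableSet_Ioi] with t ht
            rw [lintegral_mul_const' _ _ ?mne]
            case mne =>
              rw [hm]
              apply ENNReal.mul_ne_top ENNReal.ofReal_ne_top
              have hτne : (ENNReal.ofReal t) ≠ 0 := by simp [ht.out]
              simp only [ne_eq, ENNReal.rpow_eq_top_iff, not_or, not_and, not_lt]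
              constructor
              · intro h; exact absurd h hτne
              · intro h; exact absurd h ENNReal.ofReal_ne_top
            rw [lint_comp_div _ (hg.pow_const _) ht.out]
            have hτne : τ t ≠ 0 := by simp [hτ, ht.out]
            have hτtop : τ t ≠ ⊤ := by simp [hτ]
            have hstep : τ t ^ (-(1/q) : ℝ) * τ t ^ (1:ℝ) = τ t ^ (1/p : ℝ) := by
              rw [← ENNReal.rpow_add _ _ hτne hτtop]
              congr 1
              have := hpq.inv_add_inv_eq_one
              rw [one_div, one_div]; linarith [this]
            have hmt : m t * ENNReal.ofReal t = ENNReal.ofReal (φ t / t ^ (1 - 1/p)) := by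
              rw [hm, ← hkey t ht, mul_assoc]
              congr 1
              rw [← hstep, ENNReal.rpow_one]
            rw [← hmt]; ring
          have hm1 : Measurable fun t : ℝ => ENNReal.ofReal (φ t / t ^ (1 - 1/p)) :=
            (hφm.div (measurable_id.pow_const _)).ennreal_ofReal
          rw [lintegral_congr_ae this, lintegral_mul_const _ hm1]
      _ = Kl ^ p * ∫⁻ x, g x ^ p := by
          have : Kl * (∫⁻ x, g x ^ p) * Kl ^ (p/q : ℝ)
              = (Kl ^ (1:ℝ) * Kl ^ (p/q : ℝ)) * ∫⁻ x, g x ^ p := by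
            rw [ENNReal.rpow_one]; ring
          rw [this, ← ENNReal.rpow_add_of_nonneg _ _ zero_le_one (by positivity)]
          congr 2
          rw [hq]; field_simp; ring

lemma main_upper {p : ℝ} (hp : 1 ≤ p) {φ : ℝ → ℝ} (hφm : Measurable φ)
    (hφ0 : ∀ t ∈ Ioi (0:ℝ), 0 ≤ φ t) (f : ℝ → ℂ)
    (hf : AEStronglyMeasurable f volume) :
    eLpNorm (fun x : ℝ => ∫ t in Ioi (0:ℝ), f (x / t) * ((φ t / t : ℝ) : ℂ))
        (ENNReal.ofReal p) volume ≤
      (∫⁻ t in Ioi (0:ℝ), ENNReal.ofReal (φ t / t ^ (1 - 1/p))) *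
        eLpNorm f (ENNReal.ofReal p) volume := by
  have hp0 : (0:ℝ) < p := lt_of_lt_of_le one_pos hp
  set f' : ℝ → ℂ := hf.mk f with hf'
  have hf'm : StronglyMeasurable f' := hf.stronglyMeasurable_mk
  have hff' : f =ᵐ[volume] f' := hf.ae_eq_mk
  -- replace f by f' in both sides
  have hgoal1 : eLpNorm (fun x : ℝ => ∫ t in Ioi (0:ℝ), f (x / t) * ((φ t / t : ℝ) : ℂ))
      (ENNReal.ofReal p) volume
      = eLpNorm (fun x : ℝ => ∫ t in Ioi (0:ℝ), f' (x / t) * ((φ t / t : ℝ) : ℂ))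
      (ENNReal.ofReal p) volume := by
    apply eLpNorm_congr_ae
    have hN : volume {y : ℝ | f y ≠ f' y} = 0 := ae_iff.mp hff'
    filter_upwards [ae_ae_div hN] with x hx
    apply integral_congr_ae
    filter_upwards [hx] with t ht
    have : f (x / t) = f' (x / t) := by_contra fun h => ht h
    rw [this]
  rw [hgoal1, eLpNorm_congr_ae hff']
  set Kl : ℝ≥0∞ := ∫⁻ t in Ioi (0:ℝ), ENNReal.ofReal (φ t / t ^ (1 - 1/p)) with hKl
  have hpop : (ENNReal.ofReal p) ≠ 0 := by
    simp only [ne_eq, ENNReal.ofReal_eq_zero, not_le]; exact hp0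
  rw [eLpNorm_eq_lintegral_rpow_enorm_toReal hpop ENNReal.ofReal_ne_top,
    eLpNorm_eq_lintegral_rpow_enorm_toReal hpop ENNReal.ofReal_ne_top,
    ENNReal.toReal_ofReal hp0.le]
  set g : ℝ → ℝ≥0∞ := fun y => (‖f' y‖₊ : ℝ≥0∞) with hg
  have hgm : Measurable g := hf'm.measurable.enorm
  have step1 : ∀ x : ℝ, ((‖∫ t in Ioi (0:ℝ), f' (x / t) * ((φ t / t : ℝ) : ℂ)‖₊ : ℝ≥0∞)) ^ p
      ≤ (∫⁻ t in Ioi (0:ℝ), g (x / t) * ENNReal.ofReal (φ t / t)) ^ p := by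
    intro x
    apply ENNReal.rpow_le_rpow _ hp0.le
    refine (enorm_integral_le_lintegral_enorm _).trans (le_of_eq ?_)
    apply setLIntegral_congr_fun measurableSet_Ioi
    intro t ht
    simp only [enorm_mul]
    congr 1
    rw [← Real.enorm_eq_ofReal (div_nonneg (hφ0 t ht) (le_of_lt ht))]
    simp only [enorm_eq_nnnorm, Complex.nnnorm_real]
  calc (∫⁻ x, ((‖∫ t in Ioi (0:ℝ), f' (x / t) * ((φ t / t : ℝ) : ℂ)‖₊ : ℝ≥0∞)) ^ p) ^ (1/p)
      ≤ (∫⁻ x, (∫⁻ t in Ioi (0:ℝ), g (x / t) * ENNReal.ofReal (φ t / t)) ^ p) ^ (1/p) :=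
        ENNReal.rpow_le_rpow (lintegral_mono step1) (by positivity)
    _ ≤ (Kl ^ p * ∫⁻ x, g x ^ p) ^ (1/p) :=
        ENNReal.rpow_le_rpow (upper_lintegral hp hφm g hgm) (by positivity)
    _ = Kl * (∫⁻ x, g x ^ p) ^ (1/p) := by
        rw [ENNReal.mul_rpow_of_nonneg _ _ (by positivity), ← ENNReal.rpow_mul]
        congr 1
        rw [mul_one_div, div_self hp0.ne', ENNReal.rpow_one]

lemma integrableOn_inv_Ioo {a b : ℝ} (ha : 0 < a) :
    IntegrableOn (fun x : ℝ => x⁻¹) (Ioo a b) := by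
  apply (ContinuousOn.integrableOn_compact (isCompact_Icc (a := a) (b := b)) ?_).mono_set
    Ioo_subset_Icc_self
  exact ContinuousOn.inv₀ continuousOn_id fun x hx => (lt_of_lt_of_le ha hx.1).ne'

lemma sintegral_inv_Ioo {a b : ℝ} (ha : 0 < a) (hab : a ≤ b) :
    ∫ x in Ioo a b, x⁻¹ = Real.log (b / a) := by
  rw [← integral_Ioc_eq_integral_Ioo, ← intervalIntegral.integral_of_le hab]
  apply integral_inv
  rw [Set.uIcc_of_le hab]
  intro h
  exact absurd h.1 (not_le.mpr ha)

lemma lint_inv_Ioo {a b : ℝ} (ha : 0 < a) (hab : a ≤ b) :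
    ∫⁻ x in Ioo a b, ENNReal.ofReal x⁻¹ = ENNReal.ofReal (Real.log (b / a)) := by
  rw [← ofReal_integral_eq_lintegral_ofReal (integrableOn_inv_Ioo ha) ?_, sintegral_inv_Ioo ha hab]
  filter_upwards [ae_restrict_mem measurableSet_Ioo] with x hx
  exact inv_nonneg.mpr (ha.trans hx.1).le

lemma lint_rpow_Ioo {p : ℝ} (hp0 : 0 < p) {a b : ℝ} (ha : 0 < a) (hab : a ≤ b) :
    ∫⁻ x in Ioo a b, (ENNReal.ofReal (x ^ (-(1/p) : ℝ))) ^ p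
      = ENNReal.ofReal (Real.log (b / a)) := by
  rw [← lint_inv_Ioo ha hab]
  apply setLIntegral_congr_fun measurableSet_Ioo ?_
  intro x hx
  have hx0 : 0 < x := ha.trans hx.1
  dsimp only
  rw [ENNReal.ofReal_rpow_of_pos (Real.rpow_pos_of_pos hx0 _), ← Real.rpow_mul hx0.le]
  have h1 : (-(1/p)) * p = -1 := by field_simp
  rw [h1, Real.rpow_neg_one]

lemma lintegral_Ioi_eq_iSup {F : ℝ → ℝ≥0∞} (hF : Measurable F) :
    ∫⁻ t in Ioi (0:ℝ), F t
      = ⨆ n : ℕ, ∫⁻ t in Ioo (((n:ℝ)+1)⁻¹) ((n:ℝ)+1), F t := by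
  set A : ℕ → Set ℝ := fun n => Ioo (((n:ℝ)+1)⁻¹) ((n:ℝ)+1) with hA
  have hAmeas : ∀ n, MeasurableSet (A n) := fun n => measurableSet_Ioo
  have hAmono : Monotone A := by
    intro n m hnm
    apply Ioo_subset_Ioo
    · apply inv_anti₀ (by positivity)
      exact add_le_add_left (Nat.cast_le.mpr hnm) 1
    · exact add_le_add_left (Nat.cast_le.mpr hnm) 1
  have hU : Ioi (0:ℝ) = ⋃ n, A n := by
    ext t
    simp only [mem_Ioi, mem_iUnion, hA, mem_Ioo]
    constructor
    · intro ht
      obtain ⟨n, hn⟩ := exists_nat_gt (max t t⁻¹)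
      refine ⟨n, ?_, ?_⟩
      · rw [inv_lt_comm₀ (by positivity) ht]
        exact lt_of_le_of_lt (le_max_right _ _) (hn.trans (lt_add_one _))
      · exact lt_of_le_of_lt (le_max_left _ _) (hn.trans (lt_add_one _))
    · rintro ⟨n, h1, h2⟩
      exact lt_trans (by positivity) h1
  rw [hU, ← lintegral_indicator (MeasurableSet.iUnion hAmeas)]
  have hpt : (⋃ n, A n).indicator F = fun x => ⨆ n, (A n).indicator F x := by
    funext x
    by_cases hx : x ∈ ⋃ n, A n
    · obtain ⟨n, hn⟩ := mem_iUnion.mp hx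
      rw [indicator_of_mem hx]
      apply le_antisymm
      · exact le_iSup_of_le n (le_of_eq (indicator_of_mem hn F).symm)
      · exact iSup_le fun m => indicator_le' (fun _ _ => le_rfl) (fun _ _ => zero_le) x
    · rw [indicator_of_notMem hx]
      symm
      simp only [ENNReal.iSup_eq_zero]
      intro n
      exact indicator_of_notMem (fun h => hx (mem_iUnion.mpr ⟨n, h⟩)) F
  rw [hpt, lintegral_iSup (fun n => hF.indicator (hAmeas n))]
  · congr 1
    funext n
    exact lintegral_indicator (hAmeas n) F
  · intro n m hnm x
    exact indicator_le_indicator_of_subset (hAmono hnm) (fun _ => zero_le) x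

lemma main_ineq {p : ℝ} (hp : 1 ≤ p) {φ : ℝ → ℝ} (hφm : Measurable φ) (hφ0 : ∀ t, 0 ≤ φ t)
    (hcpt : ∀ a b : ℝ, 0 < a → IntegrableOn φ (Icc a b))
    {C : ℝ} (hC0 : 0 ≤ C)
    (hC : ∀ f : ℝ → ℂ, MemLp f (ENNReal.ofReal p) →
      eLpNorm (fun x : ℝ => ∫ t in Ioi (0:ℝ), f (x / t) * ((φ t / t : ℝ) : ℂ))
          (ENNReal.ofReal p) volume ≤
        ENNReal.ofReal C * eLpNorm f (ENNReal.ofReal p) volume)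
    {δ b : ℝ} (hδ : 0 < δ) (hδb : δ < b) {n : ℕ} (hn1 : 1 < (n:ℝ)) (hn2 : b < n * δ)
    (hn3 : 1 < n * δ / b) :
    (∫ t in Ioo δ b, φ t / t ^ (1 - 1/p)) ^ p * Real.log (n * δ / b)
      ≤ C ^ p * Real.log n := by
  have hp0 : (0:ℝ) < p := lt_of_lt_of_le one_pos hp
  have hb0 : (0:ℝ) < b := hδ.trans hδb
  set r : ℝ := 1 - 1/p with hr
  have hr0 : 0 ≤ r := by
    rw [hr, sub_nonneg]
    exact div_le_one_of_le₀ hp (by positivity)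
  set I : ℝ := ∫ t in Ioo δ b, φ t / t ^ r with hI
  have hIint : IntegrableOn (fun t : ℝ => φ t / t ^ r) (Ioo δ b) := by
    have h1 : IntegrableOn φ (Ioo δ b) := (hcpt δ b hδ).mono_set Ioo_subset_Icc_self
    have h2 : ContinuousOn (fun t : ℝ => (t ^ r)⁻¹) (Icc δ b) := by
      apply ContinuousOn.inv₀
      · exact (continuousOn_id.rpow_const fun t ht => Or.inl (lt_of_lt_of_le hδ ht.1).ne')
      · exact fun t ht => (Real.rpow_pos_of_pos (lt_of_lt_of_le hδ ht.1) r).ne'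
    have := IntegrableOn.mul_continuousOn ((hcpt δ b hδ)) h2 isCompact_Icc
    apply (this.mono_set Ioo_subset_Icc_self).congr_fun ?_ measurableSet_Ioo
    intro t ht
    exact (div_eq_mul_inv _ _).symm
  have hI0 : 0 ≤ I := by
    apply setIntegral_nonneg measurableSet_Ioo
    intro t ht
    exact div_nonneg (hφ0 t) (Real.rpow_nonneg (hδ.trans ht.1).le r)
  -- the test function
  set F : ℝ → ℝ := (Ioo (1:ℝ) n).indicator (fun x => x ^ (-(1/p) : ℝ)) with hF
  have hFm : Measurable F := by
    apply Measurable.indicator ?_ measurableSet_Ioo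
    exact measurable_id.pow_const _
  set f : ℝ → ℂ := fun x => ((F x : ℝ) : ℂ) with hf
  have hfm : AEStronglyMeasurable f volume :=
    (Complex.measurable_ofReal.comp hFm).aestronglyMeasurable
  have hpop : (ENNReal.ofReal p) ≠ 0 := by
    simp only [ne_eq, ENNReal.ofReal_eq_zero, not_le]; exact hp0
  -- eLpNorm of f
  have hsnorm : eLpNorm f (ENNReal.ofReal p) volume
      = ENNReal.ofReal (Real.log n) ^ (1/p : ℝ) := by
    rw [eLpNorm_eq_lintegral_rpow_enorm_toReal hpop ENNReal.ofReal_ne_top,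
      ENNReal.toReal_ofReal hp0.le]
    congr 1
    have hpt : (fun x => ((‖f x‖₊ : ℝ≥0∞)) ^ p)
        = (Ioo (1:ℝ) n).indicator (fun x => (ENNReal.ofReal (x ^ (-(1/p) : ℝ))) ^ p) := by
      funext x
      by_cases hx : x ∈ Ioo (1:ℝ) n
      · rw [indicator_of_mem hx, hf]
        simp only
        rw [Complex.nnnorm_real, hF, indicator_of_mem hx, ← enorm_eq_nnnorm,
          Real.enorm_eq_ofReal (Real.rpow_nonneg (lt_trans one_pos hx.1).le _)]
      · rw [indicator_of_notMem hx, hf]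
        simp only
        rw [Complex.nnnorm_real, hF, indicator_of_notMem hx]
        simp [ENNReal.zero_rpow_of_pos hp0]
    simp only [enorm_eq_nnnorm]
    rw [hpt, lintegral_indicator measurableSet_Ioo,
      lint_rpow_Ioo hp0 one_pos (le_of_lt hn1)]
    rw [div_one]
  have hmem : MemLp f (ENNReal.ofReal p) volume := by
    refine ⟨hfm, ?_⟩
    rw [hsnorm]
    exact ENNReal.rpow_lt_top_of_nonneg (by positivity) ENNReal.ofReal_ne_top
  have hn0 : (0:ℝ) < n := lt_trans one_pos hn1
  set Hn : ℝ → ℂ := fun x => ∫ t in Ioi (0:ℝ), f (x / t) * ((φ t / t : ℝ) : ℂ) with hHn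
  set A : ℝ → ℝ := fun x => ∫ t in Ioi (0:ℝ), F (x / t) * (φ t / t) with hA
  -- pointwise facts on the region
  have hregion : ∀ x ∈ Ioo b (n * δ), Hn x = ((A x : ℝ) : ℂ) ∧ x ^ (-(1/p) : ℝ) * I ≤ A x := by
    intro x hx
    have hx0 : (0:ℝ) < x := hb0.trans hx.1
    have hxn0 : (0:ℝ) < x / n := by positivity
    have hxnδ : x / n < δ := by
      rw [div_lt_iff₀ hn0, mul_comm]; exact hx.2
    set G : ℝ → ℝ := fun t => (x/t) ^ (-(1/p) : ℝ) * (φ t / t) with hG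
    have hGind : ∀ t ∈ Ioi (0:ℝ), F (x / t) * (φ t / t) = (Ioo (x/n) x).indicator G t := by
      intro t ht
      have ht0 : (0:ℝ) < t := ht
      by_cases hmem' : t ∈ Ioo (x/n) x
      · rw [indicator_of_mem hmem', hG, hF]
        have hxt : x / t ∈ Ioo (1:ℝ) n := by
          constructor
          · exact (one_lt_div ht0).mpr hmem'.2
          · rw [div_lt_iff₀ ht0]
            have := (div_lt_iff₀ hn0).mp hmem'.1
            linarith
        rw [indicator_of_mem hxt]
      · rw [indicator_of_notMem hmem', hF]
        have hxt : x / t ∉ Ioo (1:ℝ) n := by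
          intro hcon
          apply hmem'
          constructor
          · rw [div_lt_iff₀ hn0]
            have := (div_lt_iff₀ ht0).mp hcon.2
            linarith
          · exact (one_lt_div ht0).mp hcon.1
        rw [indicator_of_notMem hxt, zero_mul]
    have hGint : IntegrableOn G (Ioo (x/n) x) := by
      have hψ : ContinuousOn (fun t : ℝ => (x/t) ^ (-(1/p) : ℝ) * t⁻¹) (Icc (x/n) x) := by
        apply ContinuousOn.mul
        · apply ContinuousOn.rpow_const
          · exact continuousOn_const.div continuousOn_id
              (fun t ht => (lt_of_lt_of_le hxn0 ht.1).ne')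
          · intro t ht
            exact Or.inl (div_pos hx0 (lt_of_lt_of_le hxn0 ht.1)).ne'
        · exact continuousOn_id.inv₀ fun t ht => (lt_of_lt_of_le hxn0 ht.1).ne'
      have := IntegrableOn.mul_continuousOn (hcpt (x/n) x hxn0) hψ isCompact_Icc
      apply (this.mono_set Ioo_subset_Icc_self).congr_fun ?_ measurableSet_Ioo
      intro t ht
      rw [hG]
      simp only
      rw [div_eq_mul_inv]
      ring
    have hIoosub : Ioo δ b ⊆ Ioo (x/n) x :=
      Ioo_subset_Ioo hxnδ.le hx.1.le
    have hGval : ∀ t ∈ Ioo δ b, G t = x ^ (-(1/p) : ℝ) * (φ t / t ^ r) := by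
      intro t ht
      have ht0 : (0:ℝ) < t := hδ.trans ht.1
      have hne : t ^ r ≠ 0 := (Real.rpow_pos_of_pos ht0 r).ne'
      have h2 : (x/t) ^ (-(1/p) : ℝ) = x ^ (-(1/p) : ℝ) * t ^ (1/p : ℝ) := by
        rw [Real.div_rpow hx0.le ht0.le, Real.rpow_neg ht0.le, div_eq_mul_inv, inv_inv]
      have ht1 : t ^ (1/p : ℝ) * t ^ r = t := by
        rw [← Real.rpow_add ht0]
        have : 1/p + r = 1 := by rw [hr]; ring
        rw [this, Real.rpow_one]
      have h3 : t ^ (1/p : ℝ) * (φ t / t) = φ t / t ^ r := by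
        rw [← mul_div_assoc, div_eq_div_iff ht0.ne' hne]
        calc t ^ (1/p : ℝ) * φ t * t ^ r = φ t * (t ^ (1/p : ℝ) * t ^ r) := by ring
          _ = φ t * t := by rw [ht1]
      rw [hG]
      simp only
      rw [h2, mul_assoc, h3]
    have hAval : A x = ∫ t in Ioo (x/n) x, G t := by
      rw [hA]
      simp only
      rw [setIntegral_congr_fun measurableSet_Ioi hGind,
        integral_indicator measurableSet_Ioo, Measure.restrict_restrict measurableSet_Ioo]
      have hinter : Ioo (x/(n:ℝ)) x ∩ Ioi 0 = Ioo (x/(n:ℝ)) x :=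
        inter_eq_left.mpr fun t ht => lt_trans hxn0 ht.1
      rw [hinter]
    have hAlow : x ^ (-(1/p) : ℝ) * I ≤ A x := by
      rw [hAval]
      have step1 : ∫ t in Ioo δ b, G t ≤ ∫ t in Ioo (x/n) x, G t := by
        apply setIntegral_mono_set hGint ?_ (HasSubset.Subset.eventuallyLE hIoosub)
        filter_upwards [ae_restrict_mem measurableSet_Ioo] with t ht
        have ht0 : (0:ℝ) < t := lt_trans hxn0 ht.1
        rw [hG]
        simp only
        apply mul_nonneg (Real.rpow_nonneg (by positivity) _)
          (div_nonneg (hφ0 t) ht0.le)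
      refine le_trans (le_of_eq ?_) step1
      rw [setIntegral_congr_fun measurableSet_Ioo hGval, integral_const_mul]
    have hHval : Hn x = ((A x : ℝ) : ℂ) := by
      rw [hHn, hA]
      simp only
      have hfun : (fun t => f (x / t) * ((φ t / t : ℝ) : ℂ))
          = fun t => ((F (x / t) * (φ t / t) : ℝ) : ℂ) := by
        funext t
        rw [hf]
        push_cast
        ring
      rw [hfun]
      exact integral_ofReal (𝕜 := ℂ)
    exact ⟨hHval, hAlow⟩
  -- lower bound for the eLpNorm of Hn
  have hL1 : (0:ℝ) ≤ Real.log (n * δ / b) := Real.log_nonneg hn3.le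
  have hlow : ENNReal.ofReal I * ENNReal.ofReal (Real.log (n * δ / b)) ^ (1/p : ℝ)
      ≤ eLpNorm Hn (ENNReal.ofReal p) volume := by
    have hres : eLpNorm Hn (ENNReal.ofReal p) (volume.restrict (Ioo b (n * δ)))
        ≤ eLpNorm Hn (ENNReal.ofReal p) volume :=
      eLpNorm_mono_measure Hn Measure.restrict_le_self
    refine le_trans ?_ hres
    rw [eLpNorm_eq_lintegral_rpow_enorm_toReal hpop ENNReal.ofReal_ne_top,
      ENNReal.toReal_ofReal hp0.le]
    have hJ : ∫⁻ x in Ioo b (n * δ), (ENNReal.ofReal I) ^ p * (ENNReal.ofReal (x ^ (-(1/p) : ℝ))) ^ p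
        ≤ ∫⁻ x in Ioo b (n * δ), ((‖Hn x‖₊ : ℝ≥0∞)) ^ p := by
      apply lintegral_mono_ae
      filter_upwards [ae_restrict_mem measurableSet_Ioo] with x hx
      obtain ⟨hHval, hAlow⟩ := hregion x hx
      have hx0 : (0:ℝ) < x := hb0.trans hx.1
      rw [← ENNReal.mul_rpow_of_nonneg _ _ hp0.le]
      apply ENNReal.rpow_le_rpow ?_ hp0.le
      rw [← ENNReal.ofReal_mul hI0, hHval]
      calc ENNReal.ofReal (I * x ^ (-(1/p) : ℝ))
          ≤ ENNReal.ofReal (A x) := by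
            apply ENNReal.ofReal_le_ofReal
            rw [mul_comm]
            exact hAlow
        _ ≤ (‖((A x : ℝ) : ℂ)‖₊ : ℝ≥0∞) := by
            rw [Complex.nnnorm_real]
            exact Real.ofReal_le_enorm _
    refine le_trans (le_of_eq ?_) (ENNReal.rpow_le_rpow hJ (by positivity))
    rw [lintegral_const_mul' _ _ (ENNReal.rpow_ne_top_of_nonneg hp0.le ENNReal.ofReal_ne_top),
      lint_rpow_Ioo hp0 hb0 hn2.le]
    rw [ENNReal.mul_rpow_of_nonneg _ _ (by positivity : (0:ℝ) ≤ 1/p), ← ENNReal.rpow_mul]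
    have h1 : p * (1/p) = (1:ℝ) := by field_simp
    rw [h1, ENNReal.rpow_one]
  have hchain : ENNReal.ofReal I * ENNReal.ofReal (Real.log (n * δ / b)) ^ (1/p : ℝ)
      ≤ ENNReal.ofReal C * ENNReal.ofReal (Real.log n) ^ (1/p : ℝ) := by
    refine hlow.trans ((hC f hmem).trans (le_of_eq ?_))
    rw [hsnorm]
  have hpow : (ENNReal.ofReal I) ^ p * ENNReal.ofReal (Real.log (n * δ / b))
      ≤ (ENNReal.ofReal C) ^ p * ENNReal.ofReal (Real.log n) := by
    have h2 := ENNReal.rpow_le_rpow hchain hp0.le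
    rw [ENNReal.mul_rpow_of_nonneg _ _ hp0.le, ENNReal.mul_rpow_of_nonneg _ _ hp0.le,
      ← ENNReal.rpow_mul, ← ENNReal.rpow_mul] at h2
    have h1 : (1/p) * p = (1:ℝ) := by field_simp
    rw [h1, ENNReal.rpow_one, ENNReal.rpow_one] at h2
    exact h2
  have hfin : (ENNReal.ofReal C) ^ p * ENNReal.ofReal (Real.log n) ≠ ⊤ :=
    ENNReal.mul_ne_top (ENNReal.rpow_ne_top_of_nonneg hp0.le ENNReal.ofReal_ne_top)
      ENNReal.ofReal_ne_top
  have h3 := ENNReal.toReal_mono hfin hpow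
  rw [ENNReal.toReal_mul, ENNReal.toReal_mul, ← ENNReal.toReal_rpow, ← ENNReal.toReal_rpow,
    ENNReal.toReal_ofReal hI0, ENNReal.toReal_ofReal hC0, ENNReal.toReal_ofReal hL1,
    ENNReal.toReal_ofReal (Real.log_nonneg hn1.le)] at h3
  exact h3

lemma intOn_piece {p : ℝ} (hp : 1 ≤ p) {φ : ℝ → ℝ}
    (hcpt : ∀ a b : ℝ, 0 < a → IntegrableOn φ (Icc a b)) {δ b : ℝ} (hδ : 0 < δ) :
    IntegrableOn (fun t : ℝ => φ t / t ^ (1 - 1/p)) (Ioo δ b) := by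
  set r : ℝ := 1 - 1/p with hr
  have h2 : ContinuousOn (fun t : ℝ => (t ^ r)⁻¹) (Icc δ b) := by
    apply ContinuousOn.inv₀
    · exact continuousOn_id.rpow_const fun t ht => Or.inl (lt_of_lt_of_le hδ ht.1).ne'
    · exact fun t ht => (Real.rpow_pos_of_pos (lt_of_lt_of_le hδ ht.1) r).ne'
  have := IntegrableOn.mul_continuousOn (hcpt δ b hδ) h2 isCompact_Icc
  apply (this.mono_set Ioo_subset_Icc_self).congr_fun ?_ measurableSet_Ioo
  intro t ht
  exact (div_eq_mul_inv _ _).symm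

lemma lower_piece {p : ℝ} (hp : 1 ≤ p) {φ : ℝ → ℝ} (hφm : Measurable φ) (hφ0 : ∀ t, 0 ≤ φ t)
    (hcpt : ∀ a b : ℝ, 0 < a → IntegrableOn φ (Icc a b))
    {C : ℝ} (hC0 : 0 ≤ C)
    (hC : ∀ f : ℝ → ℂ, MemLp f (ENNReal.ofReal p) →
      eLpNorm (fun x : ℝ => ∫ t in Ioi (0:ℝ), f (x / t) * ((φ t / t : ℝ) : ℂ))
          (ENNReal.ofReal p) volume ≤
        ENNReal.ofReal C * eLpNorm f (ENNReal.ofReal p) volume)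
    {δ b : ℝ} (hδ : 0 < δ) (hδb : δ < b) :
    ∫ t in Ioo δ b, φ t / t ^ (1 - 1/p) ≤ C := by
  have hp0 : (0:ℝ) < p := lt_of_lt_of_le one_pos hp
  have hb0 : (0:ℝ) < b := hδ.trans hδb
  set I : ℝ := ∫ t in Ioo δ b, φ t / t ^ (1 - 1/p) with hI
  have hI0 : 0 ≤ I := by
    apply setIntegral_nonneg measurableSet_Ioo
    intro t ht
    exact div_nonneg (hφ0 t) (Real.rpow_nonneg (hδ.trans ht.1).le _)
  by_contra hIC
  push_neg at hIC
  have hCIp : C ^ p < I ^ p := Real.rpow_lt_rpow hC0 hIC hp0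
  set D : ℝ := I ^ p - C ^ p with hD
  have hD0 : 0 < D := by rw [hD]; linarith
  have hbδ1 : 1 < b / δ := (one_lt_div hδ).mpr hδb
  have hL0 : 0 ≤ Real.log (b / δ) := Real.log_nonneg hbδ1.le
  set M : ℝ := (I ^ p * Real.log (b / δ)) / D with hM
  obtain ⟨n, hn⟩ := exists_nat_gt (max (max (Real.exp M) (b / δ)) 1)
  have hn1 : 1 < (n:ℝ) := lt_of_le_of_lt (le_max_right _ _) hn
  have hnM : Real.exp M < n := lt_of_le_of_lt ((le_max_left _ _).trans (le_max_left _ _)) hn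
  have hnbδ : b / δ < n := lt_of_le_of_lt ((le_max_right _ _).trans (le_max_left _ _)) hn
  have hn2 : b < n * δ := by
    rw [div_lt_iff₀ hδ] at hnbδ
    linarith
  have hn3 : 1 < (n:ℝ) * δ / b := (one_lt_div hb0).mpr hn2
  have key := main_ineq hp hφm hφ0 hcpt hC0 hC hδ hδb hn1 hn2 hn3
  rw [← hI] at key
  have hlogsplit : Real.log ((n:ℝ) * δ / b) = Real.log n - Real.log (b / δ) := by
    have h1 : (n:ℝ) * δ / b = (n:ℝ) / (b / δ) := by field_simp
    rw [h1, Real.log_div (by positivity) (by positivity)]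
  have hlogn : M < Real.log n := by
    rw [← Real.log_exp M]
    exact Real.log_lt_log (Real.exp_pos M) hnM
  rw [hlogsplit] at key
  -- key : I^p * (log n - log(b/δ)) ≤ C^p * log n, i.e. D * log n ≤ I^p * log(b/δ)
  have hfinal : D * Real.log n ≤ I ^ p * Real.log (b / δ) := by nlinarith
  have hDM : D * M = I ^ p * Real.log (b / δ) := by
    rw [hM]
    field_simp
  nlinarith [mul_lt_mul_of_pos_left hlogn hD0]

lemma Kl_le {p : ℝ} (hp : 1 ≤ p) {φ : ℝ → ℝ} (hφm : Measurable φ) (hφ0 : ∀ t, 0 ≤ φ t)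
    (hcpt : ∀ a b : ℝ, 0 < a → IntegrableOn φ (Icc a b))
    {C : ℝ} (hC0 : 0 ≤ C)
    (hC : ∀ f : ℝ → ℂ, MemLp f (ENNReal.ofReal p) →
      eLpNorm (fun x : ℝ => ∫ t in Ioi (0:ℝ), f (x / t) * ((φ t / t : ℝ) : ℂ))
          (ENNReal.ofReal p) volume ≤
        ENNReal.ofReal C * eLpNorm f (ENNReal.ofReal p) volume) :
    ∫⁻ t in Ioi (0:ℝ), ENNReal.ofReal (φ t / t ^ (1 - 1/p)) ≤ ENNReal.ofReal C := by
  have hFm : Measurable fun t : ℝ => ENNReal.ofReal (φ t / t ^ (1 - 1/p)) :=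
    (hφm.div (measurable_id.pow_const _)).ennreal_ofReal
  rw [lintegral_Ioi_eq_iSup hFm]
  apply iSup_le
  intro n
  set δ : ℝ := ((n:ℝ)+1)⁻¹ with hδdef
  set b : ℝ := ((n:ℝ)+1) with hbdef
  have hδ : 0 < δ := by positivity
  by_cases hlt : δ < b
  · have hIint := intOn_piece hp hcpt (b := b) hδ
    rw [← ofReal_integral_eq_lintegral_ofReal hIint ?_]
    · exact ENNReal.ofReal_le_ofReal (lower_piece hp hφm hφ0 hcpt hC0 hC hδ hlt)
    · filter_upwards [ae_restrict_mem measurableSet_Ioo] with t ht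
      exact div_nonneg (hφ0 t) (Real.rpow_nonneg (hδ.trans ht.1).le _)
  · rw [Ioo_eq_empty hlt, Measure.restrict_empty, lintegral_zero_measure]
    exact zero_le

/-- For p ∈ [1,∞) and φ ≥ 0 locally integrable on (0,∞), H_φ is bounded on
L^p(ℝ) iff ∫₀^∞ φ(t) t^{-(1-1/p)} dt < ∞, and in that case the operator norm of H_φ equals
this integral (it is the least admissible constant). -/
theorem hausdorff_Lp_norm (p : ℝ) (hp : 1 ≤ p) (φ : ℝ → ℝ)
    (hφ : ∀ t ∈ Ioi (0:ℝ), 0 ≤ φ t)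
    (hloc : LocallyIntegrableOn φ (Ioi 0)) :
    ((∃ C : ℝ, 0 ≤ C ∧ ∀ f : ℝ → ℂ, MemLp f (ENNReal.ofReal p) →
        eLpNorm (fun x : ℝ => ∫ t in Ioi (0:ℝ), f (x / t) * ((φ t / t : ℝ) : ℂ))
            (ENNReal.ofReal p) volume ≤
          ENNReal.ofReal C * eLpNorm f (ENNReal.ofReal p) volume) ↔
      IntegrableOn (fun t : ℝ => φ t / t ^ (1 - 1 / p)) (Ioi 0)) ∧
    (IntegrableOn (fun t : ℝ => φ t / t ^ (1 - 1 / p)) (Ioi 0) →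
      IsLeast {C : ℝ | 0 ≤ C ∧ ∀ f : ℝ → ℂ, MemLp f (ENNReal.ofReal p) →
          eLpNorm (fun x : ℝ => ∫ t in Ioi (0:ℝ), f (x / t) * ((φ t / t : ℝ) : ℂ))
              (ENNReal.ofReal p) volume ≤
            ENNReal.ofReal C * eLpNorm f (ENNReal.ofReal p) volume}
        (∫ t in Ioi (0:ℝ), φ t / t ^ (1 - 1 / p))) := by
  have hp0 : (0:ℝ) < p := lt_of_lt_of_le one_pos hp
  -- measurable nonnegative representative of φ
  have hasm := hloc.aestronglyMeasurable
  set ψ : ℝ → ℝ := hasm.mk φ with hψ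
  have hψm : Measurable ψ := hasm.stronglyMeasurable_mk.measurable
  have hψeq : φ =ᵐ[volume.restrict (Ioi 0)] ψ := hasm.ae_eq_mk
  set φ' : ℝ → ℝ := fun t => max (ψ t) 0 with hφ'
  have hφ'm : Measurable φ' := hψm.max measurable_const
  have hφ'0 : ∀ t, 0 ≤ φ' t := fun t => le_max_right _ _
  have heq : φ =ᵐ[volume.restrict (Ioi 0)] φ' := by
    filter_upwards [hψeq, ae_restrict_mem measurableSet_Ioi] with t h1 h2
    rw [hφ']
    simp only
    rw [← h1, max_eq_left (hφ t h2)]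
  have hcpt : ∀ a b : ℝ, 0 < a → IntegrableOn φ' (Icc a b) := by
    intro a b ha
    have h1 : IntegrableOn φ (Icc a b) :=
      hloc.integrableOn_compact_subset (fun t ht => lt_of_lt_of_le ha ht.1) isCompact_Icc
    exact h1.congr
      (ae_restrict_of_ae_restrict_of_subset (fun t ht => lt_of_lt_of_le ha ht.1) heq)
  have hop : ∀ (f : ℝ → ℂ),
      (fun x : ℝ => ∫ t in Ioi (0:ℝ), f (x / t) * ((φ t / t : ℝ) : ℂ))
        = fun x : ℝ => ∫ t in Ioi (0:ℝ), f (x / t) * ((φ' t / t : ℝ) : ℂ) := by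
    intro f
    funext x
    apply integral_congr_ae
    filter_upwards [heq] with t h1
    rw [h1]
  have hwr : (fun t : ℝ => φ t / t ^ (1 - 1/p))
      =ᵐ[volume.restrict (Ioi 0)] (fun t => φ' t / t ^ (1 - 1/p)) := by
    filter_upwards [heq] with t h1
    rw [h1]
  have hIntIff : IntegrableOn (fun t : ℝ => φ t / t ^ (1 - 1/p)) (Ioi 0)
      ↔ IntegrableOn (fun t : ℝ => φ' t / t ^ (1 - 1/p)) (Ioi 0) := integrable_congr hwr
  have hKeq : (∫ t in Ioi (0:ℝ), φ t / t ^ (1 - 1/p))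
      = ∫ t in Ioi (0:ℝ), φ' t / t ^ (1 - 1/p) := integral_congr_ae hwr
  have hwrnonneg : 0 ≤ᵐ[volume.restrict (Ioi 0)] fun t : ℝ => φ' t / t ^ (1 - 1/p) := by
    filter_upwards [ae_restrict_mem measurableSet_Ioi] with t ht
    exact div_nonneg (hφ'0 t) (Real.rpow_nonneg ht.out.le _)
  -- upper bound : if integrable, the integral is an admissible constant
  have hupper : IntegrableOn (fun t : ℝ => φ t / t ^ (1 - 1/p)) (Ioi 0) →
      (0 ≤ ∫ t in Ioi (0:ℝ), φ t / t ^ (1 - 1/p)) ∧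
      ∀ f : ℝ → ℂ, MemLp f (ENNReal.ofReal p) →
        eLpNorm (fun x : ℝ => ∫ t in Ioi (0:ℝ), f (x / t) * ((φ t / t : ℝ) : ℂ))
            (ENNReal.ofReal p) volume ≤
          ENNReal.ofReal (∫ t in Ioi (0:ℝ), φ t / t ^ (1 - 1/p)) *
            eLpNorm f (ENNReal.ofReal p) volume := by
    intro hint
    have hKnonneg : 0 ≤ ∫ t in Ioi (0:ℝ), φ t / t ^ (1 - 1/p) := by
      rw [hKeq]
      exact setIntegral_nonneg measurableSet_Ioi
        (fun t ht => div_nonneg (hφ'0 t) (Real.rpow_nonneg ht.out.le _))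
    refine ⟨hKnonneg, fun f hf => ?_⟩
    rw [hop f]
    have h1 := main_upper hp hφ'm (fun t _ => hφ'0 t) f hf.1
    refine h1.trans (le_of_eq ?_)
    congr 1
    rw [hKeq, ofReal_integral_eq_lintegral_ofReal (hIntIff.mp hint) hwrnonneg]
  -- lower bound : any admissible constant dominates the lintegral
  have hlower : ∀ C : ℝ, 0 ≤ C →
      (∀ f : ℝ → ℂ, MemLp f (ENNReal.ofReal p) →
        eLpNorm (fun x : ℝ => ∫ t in Ioi (0:ℝ), f (x / t) * ((φ t / t : ℝ) : ℂ))
            (ENNReal.ofReal p) volume ≤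
          ENNReal.ofReal C * eLpNorm f (ENNReal.ofReal p) volume) →
      ∫⁻ t in Ioi (0:ℝ), ENNReal.ofReal (φ' t / t ^ (1 - 1/p)) ≤ ENNReal.ofReal C := by
    intro C hC0 hCb
    apply Kl_le hp hφ'm hφ'0 hcpt hC0
    intro f hf
    rw [← hop f]
    exact hCb f hf
  constructor
  · constructor
    · rintro ⟨C, hC0, hCb⟩
      rw [hIntIff]
      constructor
      · exact ((hφ'm.div (measurable_id.pow_const _)).aestronglyMeasurable).restrict
      · rw [HasFiniteIntegral]
        have hcongr : ∫⁻ t in Ioi (0:ℝ), ‖φ' t / t ^ (1 - 1/p)‖ₑ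
            = ∫⁻ t in Ioi (0:ℝ), ENNReal.ofReal (φ' t / t ^ (1 - 1/p)) := by
          apply lintegral_congr_ae
          filter_upwards [hwrnonneg] with t ht
          exact Real.enorm_eq_ofReal ht
        rw [hcongr]
        exact lt_of_le_of_lt (hlower C hC0 hCb) ENNReal.ofReal_lt_top
    · intro hint
      exact ⟨_, (hupper hint).1, (hupper hint).2⟩
  · intro hint
    constructor
    · exact ⟨(hupper hint).1, (hupper hint).2⟩
    · rintro C ⟨hC0, hCb⟩
      have h1 := hlower C hC0 hCb
      have h2 : ENNReal.ofReal (∫ t in Ioi (0:ℝ), φ t / t ^ (1 - 1/p))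
          = ∫⁻ t in Ioi (0:ℝ), ENNReal.ofReal (φ' t / t ^ (1 - 1/p)) := by
        rw [hKeq]
        exact ofReal_integral_eq_lintegral_ofReal (hIntIff.mp hint) hwrnonneg
      have h3 := ENNReal.toReal_mono ENNReal.ofReal_ne_top (h2 ▸ h1)
      rw [ENNReal.toReal_ofReal (hupper hint).1, ENNReal.toReal_ofReal hC0] at h3
      exact h3

end HausdorffAux
end

section
/- Let p ∈ [1,∞) and let φ be a nonnegative locally integrable function on (0,∞)ⁿ with ∫_{(0,∞)ⁿ} φ(t)/(t₁^{1-1/p}⋯tₙ^{1-1/p}) dt < ∞. Then for every f ∈ L^p(ℝⁿ), ‖H_φ f‖_{L^p(ℝⁿ)} ≤ (∫_{(0,∞)ⁿ} φ(t)/(t₁^{1-1/p}⋯tₙ^{1-1/p}) dt) ‖f‖_{L^p(ℝⁿ)}. -/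
open MeasureTheory Set

open scoped ENNReal

lemma iSup_min_natCast (a : ℝ≥0∞) : ⨆ k : ℕ, min a (k : ℝ≥0∞) = a := by
  apply le_antisymm (iSup_le fun k => min_le_left _ _)
  rcases eq_or_ne a ⊤ with rfl | ha
  · calc ⊤ = ⨆ k : ℕ, (k : ℝ≥0∞) := ENNReal.iSup_natCast.symm
      _ ≤ ⨆ k : ℕ, min ⊤ (k : ℝ≥0∞) := iSup_mono fun k => by simp
  · obtain ⟨m, hm⟩ := ENNReal.exists_nat_gt ha
    exact le_iSup_of_le m (le_min le_rfl hm.le)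

lemma minkowski_core {α β : Type*} [MeasurableSpace α] [MeasurableSpace β]
    {μ : Measure α} {ν : Measure β} [SigmaFinite μ] [SFinite ν]
    {g : α × β → ℝ≥0∞} (hg : Measurable g) {p : ℝ} (hp : 1 ≤ p) :
    (∫⁻ x, (∫⁻ t, g (x, t) ∂ν) ^ p ∂μ) ^ (1/p) ≤ ∫⁻ t, (∫⁻ x, g (x, t) ^ p ∂μ) ^ (1/p) ∂ν := by
  rcases eq_or_lt_of_le hp with rfl | hp1
  · simp only [ENNReal.rpow_one, one_div_one, ← lintegral_prod _ hg.aemeasurable,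
      ← lintegral_prod_symm _ hg.aemeasurable, le_refl]
  -- main case 1 < p
  have hpq : p.HolderConjugate (Real.conjExponent p) := Real.HolderConjugate.conjExponent hp1
  set q : ℝ := Real.conjExponent p with hqdef
  have hp0 : (0:ℝ) < p := hpq.pos
  set G : α → ℝ≥0∞ := fun x => ∫⁻ t, g (x, t) ∂ν with hGdef
  have hGm : Measurable G := hg.lintegral_prod_right'
  set B : ℕ → Set α := spanningSets μ with hBdef
  classical
  set Gk : ℕ → α → ℝ≥0∞ := fun k x => (B k).indicator (fun x => min (G x) (k : ℝ≥0∞)) x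
    with hGkdef
  have hGkm : ∀ k, Measurable (Gk k) := fun k =>
    (hGm.min measurable_const).indicator (measurableSet_spanningSets μ k)
  have hGk_le_G : ∀ k x, Gk k x ≤ G x := fun k x =>
    (Set.indicator_le_self _ _ x).trans (min_le_left _ _)
  have hGk_le_k : ∀ k x, Gk k x ≤ (k : ℝ≥0∞) := by
    intro k x
    by_cases h : x ∈ B k
    · simpa [Gk, Set.indicator_of_mem h] using min_le_right _ _
    · simp [Gk, Set.indicator_of_notMem h]
  have hGk_ne_top : ∀ k x, Gk k x ≠ ⊤ := fun k x => ((hGk_le_k k x).trans_lt (by simp)).ne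
  set Ik : ℕ → ℝ≥0∞ := fun k => ∫⁻ x, Gk k x ^ p ∂μ with hIkdef
  set J : ℝ≥0∞ := ∫⁻ t, (∫⁻ x, g (x, t) ^ p ∂μ) ^ (1/p) ∂ν with hJdef
  have hIk_top : ∀ k, Ik k ≠ ⊤ := by
    intro k
    have hb : Ik k ≤ (k : ℝ≥0∞) ^ p * μ (B k) := by
      have : Ik k ≤ ∫⁻ x, (B k).indicator (fun _ => (k : ℝ≥0∞) ^ p) x ∂μ := by
        refine lintegral_mono fun x => ?_
        by_cases h : x ∈ B k
        · rw [Set.indicator_of_mem h]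
          exact ENNReal.rpow_le_rpow (hGk_le_k k x) hp0.le
        · simp [Gk, Set.indicator_of_notMem h, ENNReal.zero_rpow_of_pos hp0]
      rwa [lintegral_indicator (measurableSet_spanningSets μ k), setLIntegral_const] at this
    exact (hb.trans_lt (ENNReal.mul_lt_top
      (ENNReal.rpow_lt_top_of_nonneg hp0.le (by simp)) (measure_spanningSets_lt_top μ k))).ne
  have key : ∀ k, Ik k ≤ J * Ik k ^ (1/q) := by
    intro k
    have hmeas : Measurable fun z : α × β => Gk k z.1 ^ (p - 1) * g z :=
      (((hGkm k).comp measurable_fst).pow_const _).mul hg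
    calc Ik k = ∫⁻ x, Gk k x ^ (p-1) * Gk k x ∂μ := by
          refine lintegral_congr fun x => ?_
          rw [show p = (p-1) + 1 by ring,
            ENNReal.rpow_add_of_nonneg _ _ (by linarith) zero_le_one, ENNReal.rpow_one]
          ring_nf
      _ ≤ ∫⁻ x, Gk k x ^ (p-1) * G x ∂μ :=
          lintegral_mono fun x => mul_le_mul_right (hGk_le_G k x) _
      _ = ∫⁻ x, ∫⁻ t, Gk k x ^ (p-1) * g (x, t) ∂ν ∂μ := by
          refine lintegral_congr fun x => ?_
          rw [lintegral_const_mul' _ _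
            (ENNReal.rpow_ne_top_of_nonneg (by linarith) (hGk_ne_top k x))]
      _ = ∫⁻ t, ∫⁻ x, Gk k x ^ (p-1) * g (x, t) ∂μ ∂ν := by
          rw [← lintegral_prod _ hmeas.aemeasurable, lintegral_prod_symm _ hmeas.aemeasurable]
      _ ≤ ∫⁻ t, (∫⁻ x, g (x, t) ^ p ∂μ) ^ (1/p) * (∫⁻ x, (Gk k x ^ (p-1)) ^ q ∂μ) ^ (1/q) ∂ν := by
          refine lintegral_mono fun t => ?_
          have := ENNReal.lintegral_mul_le_Lp_mul_Lq μ hpq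
            (f := fun x => g (x, t)) (g := fun x => Gk k x ^ (p-1))
            (hg.comp (measurable_id.prodMk measurable_const)).aemeasurable
            (((hGkm k).pow_const _)).aemeasurable
          refine le_trans (le_of_eq ?_) this
          exact lintegral_congr fun x => by simp [mul_comm]
      _ = ∫⁻ t, (∫⁻ x, g (x, t) ^ p ∂μ) ^ (1/p) * Ik k ^ (1/q) ∂ν := by
          refine lintegral_congr fun t => ?_
          congr 2
          refine lintegral_congr fun x => ?_
          rw [← ENNReal.rpow_mul, hpq.sub_one_mul_conj]
      _ = J * Ik k ^ (1/q) :=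
          lintegral_mul_const' _ _ (ENNReal.rpow_ne_top_of_nonneg hpq.symm.one_div_nonneg
            (hIk_top k))
  have hstep : ∀ k, Ik k ^ (1/p) ≤ J := by
    intro k
    rcases eq_or_ne (Ik k) 0 with h0 | h0
    · rw [h0, ENNReal.zero_rpow_of_pos (by positivity)]
      exact zero_le
    · have h1 : Ik k ^ (1/p) * Ik k ^ (1/q) = Ik k := by
        rw [← ENNReal.rpow_add _ _ h0 (hIk_top k), one_div, one_div, hpq.inv_add_inv_eq_inv, inv_one,
          ENNReal.rpow_one]
      have h2 : Ik k ^ (1/p) * Ik k ^ (1/q) ≤ J * Ik k ^ (1/q) := h1.le.trans (key k)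
      exact (ENNReal.mul_le_mul_iff_left
        (by simpa using (ENNReal.rpow_pos (h0.bot_lt) (hIk_top k)).ne')
        (ENNReal.rpow_ne_top_of_nonneg hpq.symm.one_div_nonneg (hIk_top k))).1 h2
  -- monotone convergence
  have hGk_mono : Monotone Gk := by
    intro k l hkl x
    by_cases h : x ∈ B k
    · have hl : x ∈ B l := monotone_spanningSets μ hkl h
      simp only [Gk, Set.indicator_of_mem h, Set.indicator_of_mem hl]
      exact min_le_min le_rfl (by exact_mod_cast Nat.cast_le.2 hkl)
    · simp [Gk, Set.indicator_of_notMem h]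
  have hsup : ∀ x, ⨆ k, Gk k x = G x := by
    intro x
    apply le_antisymm (iSup_le fun k => hGk_le_G k x)
    obtain ⟨k0, hk0⟩ : ∃ k, x ∈ B k := by
      have : x ∈ ⋃ k, B k := by rw [iUnion_spanningSets]; trivial
      simpa using this
    have h1 : ∀ m : ℕ, min (G x) (m : ℝ≥0∞) ≤ ⨆ k, Gk k x := by
      intro m
      refine le_iSup_of_le (max k0 m) ?_
      have hx : x ∈ B (max k0 m) := monotone_spanningSets μ (le_max_left _ _) hk0
      simp only [Gk, Set.indicator_of_mem hx]
      exact min_le_min le_rfl (by exact_mod_cast Nat.cast_le.2 (le_max_right k0 m))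
    calc G x = ⨆ m : ℕ, min (G x) (m : ℝ≥0∞) := (iSup_min_natCast _).symm
      _ ≤ ⨆ k, Gk k x := iSup_le h1
  have hIG : ∫⁻ x, G x ^ p ∂μ = ⨆ k, Ik k := by
    rw [← lintegral_iSup (fun k => (hGkm k).pow_const _)
      (fun k l hkl x => ENNReal.rpow_le_rpow (hGk_mono hkl x) hp0.le)]
    refine lintegral_congr fun x => ?_
    rw [← hsup x]
    have h := (ENNReal.orderIsoRpow p hp0).map_iSup fun k => Gk k x
    simp only [ENNReal.orderIsoRpow_apply] at h
    exact h
  calc (∫⁻ x, G x ^ p ∂μ) ^ (1/p) = ⨆ k, Ik k ^ (1/p) := by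
        rw [hIG]
        have h := (ENNReal.orderIsoRpow (1/p) (by positivity)).map_iSup Ik
        simp only [ENNReal.orderIsoRpow_apply] at h
        exact h
    _ ≤ J := iSup_le hstep

lemma minkowski_lintegral {α β : Type*} [MeasurableSpace α] [MeasurableSpace β]
    {μ : Measure α} {ν : Measure β} [SigmaFinite μ] [SFinite ν]
    {g : α × β → ℝ≥0∞} (hg : AEMeasurable g (μ.prod ν)) {p : ℝ} (hp : 1 ≤ p) :
    (∫⁻ x, (∫⁻ t, g (x, t) ∂ν) ^ p ∂μ) ^ (1/p) ≤ ∫⁻ t, (∫⁻ x, g (x, t) ^ p ∂μ) ^ (1/p) ∂ν := by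
  have heq := hg.ae_eq_mk
  have h1 : ∀ᵐ x ∂μ, ∀ᵐ t ∂ν, g (x, t) = hg.mk g (x, t) :=
    Measure.ae_ae_of_ae_prod heq
  have h2 : ∀ᵐ t ∂ν, ∀ᵐ x ∂μ, g (x, t) = hg.mk g (x, t) := by
    have hswap : ∀ᵐ (w : β × α) ∂ν.prod μ, g w.swap = hg.mk g w.swap :=
      ((Measure.measurePreserving_swap (μ := ν) (ν := μ)).quasiMeasurePreserving.tendsto_ae).eventually heq
    exact Measure.ae_ae_of_ae_prod hswap
  calc (∫⁻ x, (∫⁻ t, g (x, t) ∂ν) ^ p ∂μ) ^ (1/p)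
      = (∫⁻ x, (∫⁻ t, hg.mk g (x, t) ∂ν) ^ p ∂μ) ^ (1/p) := by
        congr 1
        refine lintegral_congr_ae ?_
        filter_upwards [h1] with x hx
        rw [lintegral_congr_ae hx]
    _ ≤ ∫⁻ t, (∫⁻ x, hg.mk g (x, t) ^ p ∂μ) ^ (1/p) ∂ν := minkowski_core hg.measurable_mk hp
    _ = ∫⁻ t, (∫⁻ x, g (x, t) ^ p ∂μ) ^ (1/p) ∂ν := by
        refine lintegral_congr_ae ?_
        filter_upwards [h2] with t ht
        congr 1
        refine lintegral_congr_ae ?_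
        filter_upwards [ht] with x hx
        rw [hx]

lemma diag_map_volume {n : ℕ} {t : Fin n → ℝ} (ht : ∀ i, 0 < t i) :
    Measure.map (fun x : Fin n → ℝ => fun i => x i / t i) volume
      = ENNReal.ofReal (∏ i, t i) • volume := by
  classical
  have hdet : Matrix.det (Matrix.diagonal fun i => (t i)⁻¹) = ∏ i, (t i)⁻¹ :=
    Matrix.det_diagonal
  have hL : ⇑(Matrix.toLin' (Matrix.diagonal fun i => (t i)⁻¹)) =
      fun x : Fin n → ℝ => fun i => x i / t i := by
    funext x
    funext i
    simp [Matrix.toLin'_apply, Matrix.mulVec_diagonal, div_eq_inv_mul, mul_comm]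
  have hd0 : Matrix.det (Matrix.diagonal fun i => (t i)⁻¹) ≠ 0 := by
    rw [hdet]
    exact (Finset.prod_pos fun i _ => inv_pos.2 (ht i)).ne'
  have hmap := Real.map_matrix_volume_pi_eq_smul_volume_pi hd0
  rw [hL] at hmap
  rw [hmap, hdet]
  congr 1
  have h1 : (∏ i, (t i)⁻¹)⁻¹ = ∏ i, t i := by
    rw [← Finset.prod_inv_distrib]
    simp
  rw [h1, abs_of_pos (Finset.prod_pos fun i _ => ht i)]

lemma scale_lintegral {n : ℕ} {t : Fin n → ℝ} (ht : ∀ i, 0 < t i)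
    {h : (Fin n → ℝ) → ℝ≥0∞} (hm : AEMeasurable h volume) :
    ∫⁻ x : Fin n → ℝ, h (fun i => x i / t i) = ENNReal.ofReal (∏ i, t i) * ∫⁻ x, h x := by
  have hmeas : Measurable fun x : Fin n → ℝ => fun i => x i / t i :=
    measurable_pi_lambda _ fun i => (measurable_pi_apply i).div measurable_const
  have hmap := diag_map_volume ht
  have hf' : AEMeasurable h (Measure.map (fun x : Fin n → ℝ => fun i => x i / t i) volume) := by
    rw [hmap]; exact hm.smul_measure _
  rw [← lintegral_map' hf' hmeas.aemeasurable, hmap, lintegral_smul_measure, smul_eq_mul]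

lemma null_preimage {n : ℕ} {A : Set (Fin n → ℝ)} (hA : MeasurableSet A)
    (h0 : volume A = 0) {t : Fin n → ℝ} (ht : ∀ i, 0 < t i) :
    volume {x : Fin n → ℝ | (fun i => x i / t i) ∈ A} = 0 := by
  have hmeas : Measurable fun x : Fin n → ℝ => fun i => x i / t i :=
    measurable_pi_lambda _ fun i => (measurable_pi_apply i).div measurable_const
  have h1 : {x : Fin n → ℝ | (fun i => x i / t i) ∈ A}
      = (fun x : Fin n → ℝ => fun i => x i / t i) ⁻¹' A := rfl
  rw [h1, ← Measure.map_apply hmeas hA, diag_map_volume ht, Measure.smul_apply, h0,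
    smul_eq_mul, mul_zero]

set_option maxHeartbeats 1000000

/-- For p ∈ [1,∞) and φ ≥ 0 locally integrable on (0,∞)ⁿ with
∫_{(0,∞)ⁿ} φ(t) ∏ tⱼ^{-(1-1/p)} dt < ∞, for every f ∈ L^p(ℝⁿ),
‖H_φ f‖_p ≤ (∫_{(0,∞)ⁿ} φ(t) ∏ tⱼ^{-(1-1/p)} dt) ‖f‖_p. -/
theorem hausdorff_multi_Lp_bound (n : ℕ) (p : ℝ) (hp : 1 ≤ p) (φ : (Fin n → ℝ) → ℝ)
    (hφ : ∀ t ∈ {t : Fin n → ℝ | ∀ i, 0 < t i}, 0 ≤ φ t)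
    (hloc : LocallyIntegrableOn φ {t : Fin n → ℝ | ∀ i, 0 < t i})
    (hint : IntegrableOn (fun t : Fin n → ℝ => φ t / ∏ i, t i ^ (1 - 1 / p))
      {t : Fin n → ℝ | ∀ i, 0 < t i})
    (f : (Fin n → ℝ) → ℂ) (hf : MemLp f (ENNReal.ofReal p)) :
    eLpNorm (fun x : Fin n → ℝ => ∫ t in {t : Fin n → ℝ | ∀ i, 0 < t i},
        f (fun i => x i / t i) * ((φ t / ∏ i, t i : ℝ) : ℂ)) (ENNReal.ofReal p) volume ≤
      ENNReal.ofReal (∫ t in {t : Fin n → ℝ | ∀ i, 0 < t i}, φ t / ∏ i, t i ^ (1 - 1 / p)) *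
        eLpNorm f (ENNReal.ofReal p) volume := by
  classical
  set S : Set (Fin n → ℝ) := {t | ∀ i, 0 < t i} with hSdef
  have hS : MeasurableSet S := by
    have h : S = ⋂ i, {t : Fin n → ℝ | 0 < t i} := by ext t; simp [hSdef]
    rw [h]
    exact MeasurableSet.iInter fun i => measurableSet_lt measurable_const (measurable_pi_apply i)
  set ν : Measure (Fin n → ℝ) := volume.restrict S with hν
  set q : ℝ≥0∞ := ENNReal.ofReal p with hq
  have hp0 : (0:ℝ) < p := lt_of_lt_of_le one_pos hp
  have hq0 : q ≠ 0 := by simp [hq, ENNReal.ofReal_eq_zero, not_le, hp0]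
  have hqt : q ≠ ∞ := ENNReal.ofReal_ne_top
  have hqr : q.toReal = p := ENNReal.toReal_ofReal hp0.le
  set g : ((Fin n → ℝ) × (Fin n → ℝ)) → ℝ≥0∞ := fun z =>
    (‖f (fun i => z.1 i / z.2 i)‖₊ : ℝ≥0∞) * ENNReal.ofReal (φ z.2 / ∏ i, z.2 i) with hgdef
  have hfm : AEMeasurable f volume := hf.1.aemeasurable
  have hAg : AEMeasurable g (volume.prod ν) := by
    have hφm : AEMeasurable φ ν := hloc.aestronglyMeasurable.aemeasurable
    have hprodm : Measurable fun z : (Fin n → ℝ) × (Fin n → ℝ) => ∏ i, z.2 i :=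
      Finset.measurable_prod _ fun i _ => (measurable_pi_apply i).comp measurable_snd
    have hpart2 : AEMeasurable (fun z : (Fin n → ℝ) × (Fin n → ℝ) =>
        ENNReal.ofReal (φ z.2 / ∏ i, z.2 i)) (volume.prod ν) :=
      (hφm.comp_snd.div hprodm.aemeasurable).ennreal_ofReal
    have key : AEMeasurable (fun w : (Fin n → ℝ) × (Fin n → ℝ) =>
        f (fun i => w.2 i / w.1 i)) (ν.prod volume) := by
      have hDm : Measurable fun w : (Fin n → ℝ) × (Fin n → ℝ) => fun i => w.2 i / w.1 i :=
        measurable_pi_lambda _ fun i =>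
          ((measurable_pi_apply i).comp measurable_snd).div
            ((measurable_pi_apply i).comp measurable_fst)
      refine ⟨fun w => hfm.mk f (fun i => w.2 i / w.1 i), hfm.measurable_mk.comp hDm, ?_⟩
      have hA0 : volume {y : Fin n → ℝ | ¬ f y = hfm.mk f y} = 0 := by
        exact ae_iff.1 hfm.ae_eq_mk
      set A := toMeasurable volume {y : Fin n → ℝ | ¬ f y = hfm.mk f y} with hAdef
      have hAm : MeasurableSet A := measurableSet_toMeasurable _ _
      have hA0' : volume A = 0 := by rw [hAdef, measure_toMeasurable]; exact hA0
      have hnull : (ν.prod volume) {w : (Fin n → ℝ) × (Fin n → ℝ) |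
          (fun i => w.2 i / w.1 i) ∈ A} = 0 := by
        refine (Measure.measure_prod_null (μ := ν) (ν := volume) (hDm hAm)).2 ?_
        filter_upwards [ae_restrict_mem hS] with t htS
        exact null_preimage hAm hA0' htS
      have hsub : {w : (Fin n → ℝ) × (Fin n → ℝ) |
            ¬ f (fun i => w.2 i / w.1 i) = hfm.mk f (fun i => w.2 i / w.1 i)}
          ⊆ {w : (Fin n → ℝ) × (Fin n → ℝ) | (fun i => w.2 i / w.1 i) ∈ A} :=
        fun w hw => subset_toMeasurable _ _ hw
      exact ae_iff.2 (measure_mono_null hsub hnull)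
    have hpart1 : AEMeasurable (fun z : (Fin n → ℝ) × (Fin n → ℝ) =>
        (‖f (fun i => z.1 i / z.2 i)‖₊ : ℝ≥0∞)) (volume.prod ν) :=
      key.prod_swap.aestronglyMeasurable.enorm
    exact hpart1.mul hpart2
  have hN : eLpNorm f q volume ≠ ⊤ := hf.2.ne
  set Np : ℝ≥0∞ := ∫⁻ y, (‖f y‖₊ : ℝ≥0∞) ^ p ∂volume with hNpdef
  have hNpm : AEMeasurable (fun y : Fin n → ℝ => (‖f y‖₊ : ℝ≥0∞) ^ p) volume :=
    hf.1.enorm.pow_const _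
  have heLp : eLpNorm f q volume = Np ^ (1/p) := by
    rw [eLpNorm_eq_lintegral_rpow_enorm_toReal hq0 hqt, hqr]
    rfl
  have stepA : ∀ x : Fin n → ℝ,
      (‖∫ t in S, f (fun i => x i / t i) * ((φ t / ∏ i, t i : ℝ) : ℂ)‖₊ : ℝ≥0∞)
        ≤ ∫⁻ t, g (x, t) ∂ν := by
    intro x
    refine le_trans (enorm_integral_le_lintegral_enorm _) (le_of_eq ?_)
    refine lintegral_congr_ae ?_
    filter_upwards [ae_restrict_mem hS] with t htS
    have hr : (0:ℝ) ≤ φ t / ∏ i, t i :=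
      div_nonneg (hφ t htS) (Finset.prod_pos fun i _ => htS i).le
    simp only [hgdef, nnnorm_mul, ENNReal.coe_mul]
    rw [enorm_mul]
    congr 1
    rw [← Real.enorm_eq_ofReal hr]
    rw [← ofReal_norm, ← ofReal_norm, Complex.norm_real]
  calc eLpNorm (fun x : Fin n → ℝ => ∫ t in S,
        f (fun i => x i / t i) * ((φ t / ∏ i, t i : ℝ) : ℂ)) q volume
      = (∫⁻ x : Fin n → ℝ, (‖∫ t in S, f (fun i => x i / t i) * ((φ t / ∏ i, t i : ℝ) : ℂ)‖₊ : ℝ≥0∞) ^ p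
          ∂volume) ^ (1/p) := by
        rw [eLpNorm_eq_lintegral_rpow_enorm_toReal hq0 hqt, hqr]
        rfl
    _ ≤ (∫⁻ x : Fin n → ℝ, (∫⁻ t, g (x, t) ∂ν) ^ p ∂volume) ^ (1/p) :=
        ENNReal.rpow_le_rpow
          (lintegral_mono fun x => ENNReal.rpow_le_rpow (stepA x) hp0.le) (by positivity)
    _ ≤ ∫⁻ t, (∫⁻ x : Fin n → ℝ, g (x, t) ^ p ∂volume) ^ (1/p) ∂ν := minkowski_lintegral hAg hp
    _ = ∫⁻ t, ENNReal.ofReal (φ t / ∏ i, t i ^ (1 - 1/p)) * eLpNorm f q volume ∂ν := by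
        refine lintegral_congr_ae ?_
        filter_upwards [ae_restrict_mem hS] with t htS
        have hP : (0:ℝ) < ∏ i, t i := Finset.prod_pos fun i _ => htS i
        have hφt : (0:ℝ) ≤ φ t := hφ t htS
        set c : ℝ≥0∞ := ENNReal.ofReal (φ t / ∏ i, t i) with hcdef
        have hct : c ^ p ≠ ⊤ := ENNReal.rpow_ne_top_of_nonneg hp0.le ENNReal.ofReal_ne_top
        have h2 : ∫⁻ x, g (x, t) ^ p ∂volume = ENNReal.ofReal (∏ i, t i) * Np * c ^ p := by
          have h1 : ∀ x : Fin n → ℝ, g (x, t) ^ p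
              = (‖f (fun i => x i / t i)‖₊ : ℝ≥0∞) ^ p * c ^ p := fun x =>
            ENNReal.mul_rpow_of_nonneg _ _ hp0.le
          simp only [h1]
          rw [lintegral_mul_const' _ _ hct, scale_lintegral htS hNpm]
        have h3 : (∫⁻ x, g (x, t) ^ p ∂volume) ^ (1/p)
            = ENNReal.ofReal (∏ i, t i) ^ (1/p) * Np ^ (1/p) * c := by
          rw [h2, ENNReal.mul_rpow_of_nonneg _ _ (by positivity),
            ENNReal.mul_rpow_of_nonneg _ _ (by positivity), ← ENNReal.rpow_mul,
            mul_one_div_cancel hp0.ne', ENNReal.rpow_one]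
        have h4 : c * ENNReal.ofReal (∏ i, t i) ^ (1/p)
            = ENNReal.ofReal (φ t / ∏ i, t i ^ (1 - 1/p)) := by
          rw [ENNReal.ofReal_rpow_of_pos hP, hcdef,
            ← ENNReal.ofReal_mul (div_nonneg hφt hP.le)]
          congr 1
          have hprod : ∏ i, t i ^ (1 - 1/p) = (∏ i, t i) ^ (1 - 1/p) :=
            Real.finset_prod_rpow _ _ (fun i _ => (htS i).le) _
          rw [hprod, Real.rpow_sub hP, Real.rpow_one]
          have hpp : (∏ i, t i) ^ (1/p) ≠ 0 := (Real.rpow_pos_of_pos hP _).ne'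
          field_simp
        rw [h3, heLp]
        rw [show ENNReal.ofReal (∏ i, t i) ^ (1/p) * Np ^ (1/p) * c
            = c * ENNReal.ofReal (∏ i, t i) ^ (1/p) * Np ^ (1/p) by ring, h4]
    _ = (∫⁻ t, ENNReal.ofReal (φ t / ∏ i, t i ^ (1 - 1/p)) ∂ν) * eLpNorm f q volume :=
        lintegral_mul_const' _ _ hN
    _ = ENNReal.ofReal (∫ t in S, φ t / ∏ i, t i ^ (1 - 1/p)) * eLpNorm f q volume := by
        congr 1
        have hnn : 0 ≤ᵐ[ν] fun t => φ t / ∏ i, t i ^ (1 - 1/p) := by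
          filter_upwards [ae_restrict_mem hS] with t htS
          exact div_nonneg (hφ t htS)
            (Finset.prod_nonneg fun i _ => Real.rpow_nonneg (htS i).le _)
        exact (ofReal_integral_eq_lintegral_ofReal hint hnn).symm
end

section
/- Let φ be a nonnegative locally integrable function on (0,∞)ⁿ with ∫_{(0,∞)ⁿ} φ(t) dt < ∞. Then for every f ∈ L¹(ℝⁿ), the Fourier transform of H_φ f satisfies (H_φ f)^(y₁,…,yₙ) = ∫_{(0,∞)ⁿ} f̂(t₁y₁,…,tₙyₙ) φ(t₁,…,tₙ) dt₁⋯dtₙ = H*_φ f̂(y) for all y ∈ ℝⁿ. -/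
open MeasureTheory Set Real

namespace FourierHausdorffAux

variable {n : ℕ}

lemma map_diag (t : Fin n → ℝ) (ht : ∀ i, t i ≠ 0) :
    Measure.map (fun u : Fin n → ℝ => fun i => t i * u i) volume
      = ENNReal.ofReal |(∏ i, t i)⁻¹| • volume := by
  classical
  have hfun : (fun u : Fin n → ℝ => fun i => t i * u i)
      = ⇑(Matrix.toLin' (Matrix.diagonal t)) := by
    funext u
    funext i
    simp [Matrix.toLin'_apply, Matrix.mulVec_diagonal]
  have hdet : LinearMap.det (Matrix.toLin' (Matrix.diagonal t)) = ∏ i, t i := by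
    rw [LinearMap.det_toLin', Matrix.det_diagonal]
  have h0 : LinearMap.det (Matrix.toLin' (Matrix.diagonal t)) ≠ 0 := by
    rw [hdet]; exact Finset.prod_ne_zero_iff.mpr fun i _ => ht i
  rw [hfun]
  have h := Measure.map_linearMap_addHaar_eq_smul_addHaar (volume : Measure (Fin n → ℝ)) h0
  rw [hdet] at h
  exact h

lemma map_div (t : Fin n → ℝ) (ht : ∀ i, t i ≠ 0) :
    Measure.map (fun x : Fin n → ℝ => fun i => x i / t i) volume
      = ENNReal.ofReal |∏ i, t i| • volume := by
  have h := map_diag (fun i => (t i)⁻¹) (fun i => inv_ne_zero (ht i))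
  have hfun : (fun x : Fin n → ℝ => fun i => x i / t i)
      = (fun u : Fin n → ℝ => fun i => (t i)⁻¹ * u i) := by
    funext x; funext i; rw [div_eq_inv_mul]
  rw [hfun, h]
  congr 2
  rw [Finset.prod_inv_distrib, inv_inv]

lemma measurable_divmap (t : Fin n → ℝ) :
    Measurable fun x : Fin n → ℝ => fun i => x i / t i :=
  measurable_pi_lambda _ fun i => (measurable_pi_apply i).div_const _

lemma integral_comp_div {E : Type*} [NormedAddCommGroup E] [NormedSpace ℝ E]
    (t : Fin n → ℝ) (ht : ∀ i, t i ≠ 0) {g : (Fin n → ℝ) → E}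
    (hg : AEStronglyMeasurable g volume) :
    ∫ x : Fin n → ℝ, g (fun i => x i / t i) = |∏ i, t i| • ∫ u, g u := by
  have hmap := map_div t ht
  have hg' : AEStronglyMeasurable g
      (Measure.map (fun x : Fin n → ℝ => fun i => x i / t i) volume) := by
    rw [hmap]; exact hg.mono_ac Measure.smul_absolutelyContinuous
  rw [← integral_map (measurable_divmap t).aemeasurable hg', hmap, integral_smul_measure,
    ENNReal.toReal_ofReal (abs_nonneg _)]

lemma integrable_comp_div (t : Fin n → ℝ) (ht : ∀ i, t i ≠ 0) {g : (Fin n → ℝ) → ℂ}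
    (hg : Integrable g volume) :
    Integrable (fun x : Fin n → ℝ => g (fun i => x i / t i)) volume := by
  have hmap := map_div t ht
  have hg' : AEStronglyMeasurable g
      (Measure.map (fun x : Fin n → ℝ => fun i => x i / t i) volume) := by
    rw [hmap]; exact hg.1.mono_ac Measure.smul_absolutelyContinuous
  have h := (integrable_map_measure hg' (measurable_divmap t).aemeasurable).mp ?_
  · exact h
  · rw [hmap]
    refine (integrable_smul_measure ?_ ENNReal.ofReal_ne_top).mpr hg
    exact ne_of_gt (ENNReal.ofReal_pos.mpr
      (abs_pos.mpr (Finset.prod_ne_zero_iff.mpr fun i _ => ht i)))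

end FourierHausdorffAux

set_option maxHeartbeats 1000000 in
open FourierHausdorffAux in
/-- If φ ≥ 0 is locally integrable on (0,∞)ⁿ with ∫_{(0,∞)ⁿ} φ < ∞, then for
every f ∈ L¹(ℝⁿ) and every y ∈ ℝⁿ, the Fourier transform
(H_φ f)^(y) = ∫_{(0,∞)ⁿ} f̂(t₁y₁,…,tₙyₙ) φ(t) dt = H*_φ f̂ (y), where
ĝ(y) = ∫ g(x) e^{-2πi x·y} dx. -/
theorem fourier_hausdorff (n : ℕ) (φ : (Fin n → ℝ) → ℝ)
    (hφ : ∀ t ∈ {t : Fin n → ℝ | ∀ i, 0 < t i}, 0 ≤ φ t)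
    (hloc : LocallyIntegrableOn φ {t : Fin n → ℝ | ∀ i, 0 < t i})
    (hint : IntegrableOn φ {t : Fin n → ℝ | ∀ i, 0 < t i})
    (f : (Fin n → ℝ) → ℂ) (hf : Integrable f) (y : Fin n → ℝ) :
    (∫ x : Fin n → ℝ,
        Complex.exp (((-2 * π * ∑ i, x i * y i : ℝ) : ℂ) * Complex.I) *
          ∫ t in {t : Fin n → ℝ | ∀ i, 0 < t i},
            f (fun i => x i / t i) * ((φ t / ∏ i, t i : ℝ) : ℂ)) =
      ∫ t in {t : Fin n → ℝ | ∀ i, 0 < t i},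
        (∫ x : Fin n → ℝ,
          Complex.exp (((-2 * π * ∑ i, x i * (t i * y i) : ℝ) : ℂ) * Complex.I) * f x) *
          ((φ t : ℝ) : ℂ) := by
  classical
  set S : Set (Fin n → ℝ) := {t | ∀ i, 0 < t i} with hSdef
  have hS : MeasurableSet S := by
    have h : S = ⋂ i, {t : Fin n → ℝ | 0 < t i} := by ext t; simp [hSdef]
    rw [h]
    exact MeasurableSet.iInter fun i =>
      measurableSet_lt measurable_const (measurable_pi_apply i)
  have hexpcont : ∀ v : Fin n → ℝ, Continuous fun x : Fin n → ℝ =>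
      Complex.exp (((-2 * π * ∑ i, x i * v i : ℝ) : ℂ) * Complex.I) := by
    intro v
    refine Complex.continuous_exp.comp ?_
    refine Continuous.mul (Complex.continuous_ofReal.comp ?_) continuous_const
    exact continuous_const.mul (continuous_finset_sum _ fun i _ =>
      (continuous_apply i).mul continuous_const)
  have hdivmeas : Measurable fun p : (Fin n → ℝ) × (Fin n → ℝ) =>
      (fun i => p.1 i / p.2 i : Fin n → ℝ) :=
    measurable_pi_lambda _ fun i =>
      ((measurable_pi_apply i).comp measurable_fst).div
        ((measurable_pi_apply i).comp measurable_snd)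
  have hqmp : Measure.QuasiMeasurePreserving
      (fun p : (Fin n → ℝ) × (Fin n → ℝ) => (fun i => p.1 i / p.2 i : Fin n → ℝ))
      (volume.prod (volume.restrict S)) volume := by
    refine ⟨hdivmeas, Measure.AbsolutelyContinuous.mk fun N hN hN0 => ?_⟩
    rw [Measure.map_apply hdivmeas hN, Measure.prod_apply_symm (hdivmeas hN)]
    have hslice : ∀ᵐ t ∂(volume.restrict S),
        volume ((fun x : Fin n → ℝ => (x, t)) ⁻¹'
          ((fun p : (Fin n → ℝ) × (Fin n → ℝ) =>
            (fun i => p.1 i / p.2 i : Fin n → ℝ)) ⁻¹' N)) = 0 := by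
      filter_upwards [ae_restrict_mem hS] with t ht
      have heq : ((fun x : Fin n → ℝ => (x, t)) ⁻¹'
          ((fun p : (Fin n → ℝ) × (Fin n → ℝ) =>
            (fun i => p.1 i / p.2 i : Fin n → ℝ)) ⁻¹' N))
          = (fun x : Fin n → ℝ => (fun i => x i / t i : Fin n → ℝ)) ⁻¹' N := rfl
      rw [heq, ← Measure.map_apply (measurable_divmap t) hN,
        map_div t fun i => (ht i).ne']
      simp [hN0]
    calc ∫⁻ t, volume ((fun x : Fin n → ℝ => (x, t)) ⁻¹'
            ((fun p : (Fin n → ℝ) × (Fin n → ℝ) =>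
              (fun i => p.1 i / p.2 i : Fin n → ℝ)) ⁻¹' N)) ∂(volume.restrict S)
        = ∫⁻ _, 0 ∂(volume.restrict S) := lintegral_congr_ae hslice
      _ = 0 := lintegral_zero
  have hFmeas : AEStronglyMeasurable
      (Function.uncurry fun x t : Fin n → ℝ =>
        Complex.exp (((-2 * π * ∑ i, x i * y i : ℝ) : ℂ) * Complex.I) *
          (f (fun i => x i / t i) * ((φ t / ∏ i, t i : ℝ) : ℂ)))
      (volume.prod (volume.restrict S)) := by
    have h1 : AEStronglyMeasurable
        (fun p : (Fin n → ℝ) × (Fin n → ℝ) => f (fun i => p.1 i / p.2 i))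
        (volume.prod (volume.restrict S)) := hf.1.comp_quasiMeasurePreserving hqmp
    have h2 : AEStronglyMeasurable
        (fun p : (Fin n → ℝ) × (Fin n → ℝ) =>
          Complex.exp (((-2 * π * ∑ i, p.1 i * y i : ℝ) : ℂ) * Complex.I))
        (volume.prod (volume.restrict S)) :=
      ((hexpcont y).comp continuous_fst).aestronglyMeasurable
    have hr : AEStronglyMeasurable (fun t : Fin n → ℝ => φ t * (∏ i, t i)⁻¹)
        (volume.restrict S) :=
      hint.1.mul
        ((Finset.univ.measurable_prod fun i _ =>
          measurable_pi_apply i).inv.aestronglyMeasurable)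
    have h3 : AEStronglyMeasurable
        (fun t : Fin n → ℝ => ((φ t / ∏ i, t i : ℝ) : ℂ)) (volume.restrict S) := by
      simp only [div_eq_mul_inv]
      exact Complex.continuous_ofReal.comp_aestronglyMeasurable hr
    have h4 := h3.comp_snd (μ := (volume : Measure (Fin n → ℝ)))
    exact h2.mul (h1.mul h4)
  have hFint : Integrable
      (Function.uncurry fun x t : Fin n → ℝ =>
        Complex.exp (((-2 * π * ∑ i, x i * y i : ℝ) : ℂ) * Complex.I) *
          (f (fun i => x i / t i) * ((φ t / ∏ i, t i : ℝ) : ℂ)))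
      (volume.prod (volume.restrict S)) := by
    rw [integrable_prod_iff' hFmeas]
    constructor
    · filter_upwards [ae_restrict_mem hS] with t ht
      have hft : Integrable (fun x : Fin n → ℝ => f (fun i => x i / t i)) volume :=
        integrable_comp_div t (fun i => (ht i).ne') hf
      show Integrable (fun x : Fin n → ℝ =>
        Complex.exp (((-2 * π * ∑ i, x i * y i : ℝ) : ℂ) * Complex.I) *
          (f (fun i => x i / t i) * ((φ t / ∏ i, t i : ℝ) : ℂ))) volume
      exact (hft.mul_const _).bdd_mul (hexpcont y).aestronglyMeasurable
        (Filter.Eventually.of_forall fun x => le_of_eq (Complex.norm_exp_ofReal_mul_I _))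
    · refine ((hint.const_mul (∫ x : Fin n → ℝ, ‖f x‖)).congr ?_)
      filter_upwards [ae_restrict_mem hS] with t ht
      have hprodpos : 0 < ∏ i, t i := Finset.prod_pos fun i _ => ht i
      have hnorm : ∀ x : Fin n → ℝ,
          ‖Complex.exp (((-2 * π * ∑ i, x i * y i : ℝ) : ℂ) * Complex.I) *
              (f (fun i => x i / t i) * ((φ t / ∏ i, t i : ℝ) : ℂ))‖
            = ‖f (fun i => x i / t i)‖ * (φ t / ∏ i, t i) := by
        intro x
        rw [norm_mul, norm_mul, Complex.norm_exp_ofReal_mul_I, one_mul,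
          Complex.norm_real, Real.norm_eq_abs,
          abs_of_nonneg (div_nonneg (hφ t ht) hprodpos.le)]
      have hchange : ∫ x : Fin n → ℝ, ‖f (fun i => x i / t i)‖
          = |∏ i, t i| • ∫ u : Fin n → ℝ, ‖f u‖ :=
        integral_comp_div t (fun i => (ht i).ne') hf.1.norm
      show (∫ x : Fin n → ℝ, ‖f x‖) * φ t
          = ∫ x : Fin n → ℝ,
            ‖Complex.exp (((-2 * π * ∑ i, x i * y i : ℝ) : ℂ) * Complex.I) *
              (f (fun i => x i / t i) * ((φ t / ∏ i, t i : ℝ) : ℂ))‖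
      calc (∫ x : Fin n → ℝ, ‖f x‖) * φ t
          = (∫ x : Fin n → ℝ, ‖f (fun i => x i / t i)‖) * (φ t / ∏ i, t i) := by
            rw [hchange, smul_eq_mul, abs_of_pos hprodpos]
            field_simp
        _ = ∫ x : Fin n → ℝ, ‖f (fun i => x i / t i)‖ * (φ t / ∏ i, t i) :=
            (integral_mul_const _ _).symm
        _ = ∫ x : Fin n → ℝ,
            ‖Complex.exp (((-2 * π * ∑ i, x i * y i : ℝ) : ℂ) * Complex.I) *
              (f (fun i => x i / t i) * ((φ t / ∏ i, t i : ℝ) : ℂ))‖ :=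
            integral_congr_ae (Filter.Eventually.of_forall fun x => (hnorm x).symm)
  have hswap := integral_integral_swap hFint
  calc (∫ x : Fin n → ℝ,
        Complex.exp (((-2 * π * ∑ i, x i * y i : ℝ) : ℂ) * Complex.I) *
          ∫ t in S, f (fun i => x i / t i) * ((φ t / ∏ i, t i : ℝ) : ℂ))
      = ∫ x : Fin n → ℝ, ∫ t in S,
          Complex.exp (((-2 * π * ∑ i, x i * y i : ℝ) : ℂ) * Complex.I) *
            (f (fun i => x i / t i) * ((φ t / ∏ i, t i : ℝ) : ℂ)) := by
        simp_rw [integral_const_mul]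
    _ = ∫ t in S, ∫ x : Fin n → ℝ,
          Complex.exp (((-2 * π * ∑ i, x i * y i : ℝ) : ℂ) * Complex.I) *
            (f (fun i => x i / t i) * ((φ t / ∏ i, t i : ℝ) : ℂ)) := hswap
    _ = ∫ t in S,
          (∫ x : Fin n → ℝ,
            Complex.exp (((-2 * π * ∑ i, x i * (t i * y i) : ℝ) : ℂ) * Complex.I) * f x) *
            ((φ t : ℝ) : ℂ) := by
        refine setIntegral_congr_fun hS fun t ht => ?_
        have hprodpos : 0 < ∏ i, t i := Finset.prod_pos fun i _ => ht i
        have htne : ∀ i, t i ≠ 0 := fun i => (ht i).ne'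
        have hGmeas : AEStronglyMeasurable
            (fun u : Fin n → ℝ =>
              Complex.exp (((-2 * π * ∑ i, u i * (t i * y i) : ℝ) : ℂ) * Complex.I) * f u)
            volume :=
          ((hexpcont fun i => t i * y i).aestronglyMeasurable).mul hf.1
        have hcv := integral_comp_div (E := ℂ) t htne hGmeas
        have hsum : ∀ x : Fin n → ℝ,
            (∑ i, (x i / t i) * (t i * y i)) = ∑ i, x i * y i := by
          intro x
          refine Finset.sum_congr rfl fun i _ => ?_
          field_simp [htne i]
        simp only at hcv
        simp_rw [hsum] at hcv
        calc ∫ x : Fin n → ℝ,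
              Complex.exp (((-2 * π * ∑ i, x i * y i : ℝ) : ℂ) * Complex.I) *
                (f (fun i => x i / t i) * ((φ t / ∏ i, t i : ℝ) : ℂ))
            = ∫ x : Fin n → ℝ,
              (Complex.exp (((-2 * π * ∑ i, x i * y i : ℝ) : ℂ) * Complex.I) *
                f (fun i => x i / t i)) * ((φ t / ∏ i, t i : ℝ) : ℂ) := by
              simp_rw [mul_assoc]
          _ = (∫ x : Fin n → ℝ,
              Complex.exp (((-2 * π * ∑ i, x i * y i : ℝ) : ℂ) * Complex.I) *
                f (fun i => x i / t i)) * ((φ t / ∏ i, t i : ℝ) : ℂ) :=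
              integral_mul_const _ _
          _ = (|∏ i, t i| • ∫ u : Fin n → ℝ,
              Complex.exp (((-2 * π * ∑ i, u i * (t i * y i) : ℝ) : ℂ) * Complex.I) * f u) *
                ((φ t / ∏ i, t i : ℝ) : ℂ) := by rw [hcv]
          _ = (∫ x : Fin n → ℝ,
              Complex.exp (((-2 * π * ∑ i, x i * (t i * y i) : ℝ) : ℂ) * Complex.I) * f x) *
                ((φ t : ℝ) : ℂ) := by
              rw [abs_of_pos hprodpos, Complex.real_smul, Complex.ofReal_div]
              have h0 : ((∏ i, t i : ℝ) : ℂ) ≠ 0 := Complex.ofReal_ne_zero.mpr hprodpos.ne'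
              have hre : (((∏ i, t i : ℝ) : ℂ) *
                  ∫ x : Fin n → ℝ,
                    Complex.exp (((-2 * π * ∑ i, x i * (t i * y i) : ℝ) : ℂ) * Complex.I) * f x) *
                    (((φ t : ℝ) : ℂ) / ((∏ i, t i : ℝ) : ℂ))
                  = ((∫ x : Fin n → ℝ,
                    Complex.exp (((-2 * π * ∑ i, x i * (t i * y i) : ℝ) : ℂ) * Complex.I) * f x) *
                    ((φ t : ℝ) : ℂ)) * (((∏ i, t i : ℝ) : ℂ) / ((∏ i, t i : ℝ) : ℂ)) := by
                ring
              rw [hre, div_self h0, mul_one]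
end
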